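/- arXiv:math/9201202 — 3 statements merged into one kernel-verified Lean document; each statement's English description precedes it below -/
import Mathlib

section
/- Let T : Z → L_1(μ) be a bounded linear operator from a Banach space Z. Suppose z_1, …, z_m are in the closed unit ball of Z and F_1, …, F_m are mutually disjoint μ-measurable sets such that ‖1_{F_i}·Tz_i‖_{L_1(μ)} ≥ δ·‖T‖ > 0 for each i = 1, …, m. Then there exist a natural number k ≥ (1/8)·δ·m and bounded linear operators A : ℓ_1^k → Z and B : L_1(μ) → ℓ_1^k such that B∘T∘A = id_{ℓ_1^k} and ‖A‖·‖B‖·‖T‖ ≤ 2·δ^{−1}; in particular γ_T(ℓ_1^k) ≤ 2·δ^{−1}·‖T‖^{−1} for some k ≥ (1/8)·δ·m. -/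
open MeasureTheory ENNReal

noncomputable section

/-- `ℓ_1^k`: `ℝ^k` with the `ℓ_1` norm. -/
abbrev ellOne (k : ℕ) := PiLp 1 (fun _ : Fin k => ℝ)

/-- `ℓ_∞^k`: `ℝ^k` with the sup norm. -/
abbrev ellInf (k : ℕ) := PiLp ⊤ (fun _ : Fin k => ℝ)

/-- The factorization constant `γ_T(U)` of `U` through `T`, as a value in `ℝ≥0∞`
(`∞` if no bounded factorization `U = B ∘ T ∘ A` exists). -/
def gammaFac {Z W X Y : Type*} [NormedAddCommGroup Z] [NormedSpace ℝ Z]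
    [NormedAddCommGroup W] [NormedSpace ℝ W] [NormedAddCommGroup X] [NormedSpace ℝ X]
    [NormedAddCommGroup Y] [NormedSpace ℝ Y]
    (T : Z →L[ℝ] W) (U : X →L[ℝ] Y) : ℝ≥0∞ :=
  sInf {c : ℝ≥0∞ | ∃ (A : X →L[ℝ] Z) (B : W →L[ℝ] Y),
    B.comp (T.comp A) = U ∧ c = ENNReal.ofReal (‖A‖ * ‖B‖)}

/-- The conjugate exponent `t* = t/(t-1)`, with `∞* = 1`, as a real number. -/
def conjExp (t : ℝ≥0∞) : ℝ := if t = ∞ then 1 else t.toReal / (t.toReal - 1)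

/-- `C_{p,q}(u)`: the infimum over changes of density `h > 0`, `h ∈ L_s(μ)` (where
`1/q + 1/s = 1/p`) of `‖h‖_s ⬝ ‖h⁻¹ u : Z → L_q(μ)‖`, as a value in `ℝ≥0∞`. -/
def Cfac {Ω : Type*} [MeasurableSpace Ω] {μ : Measure Ω} {Z : Type*}
    [NormedAddCommGroup Z] [NormedSpace ℝ Z] (p q : ℝ≥0∞) [Fact (1 ≤ p)]
    (u : Z →L[ℝ] Lp ℝ p μ) : ℝ≥0∞ :=
  sInf {c : ℝ≥0∞ | ∃ (h : Ω → ℝ) (s : ℝ≥0∞) (M : ℝ),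
    1 / q + 1 / s = 1 / p ∧
    (∀ᵐ x ∂μ, 0 < h x) ∧ MemLp h s μ ∧ 0 ≤ M ∧
    (∀ z : Z, eLpNorm (fun x => (u z : Ω → ℝ) x / h x) q μ ≤ ENNReal.ofReal (M * ‖z‖)) ∧
    c = eLpNorm h s μ * ENNReal.ofReal M}

/-- The `t`-summing norm `π_t(U)` of an operator, as a value in `ℝ≥0∞`. -/
def piSum {X Y : Type*} [NormedAddCommGroup X] [NormedSpace ℝ X]
    [NormedAddCommGroup Y] [NormedSpace ℝ Y] (t : ℝ) (U : X →L[ℝ] Y) : ℝ≥0∞ :=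
  sInf {c : ℝ≥0∞ | ∃ C : ℝ, 0 ≤ C ∧ c = ENNReal.ofReal C ∧
    ∀ (m : ℕ) (x : Fin m → X),
      (∑ i, ‖U (x i)‖ ^ t) ^ (1 / t) ≤
        C * sSup {r : ℝ | ∃ f : X →L[ℝ] ℝ, ‖f‖ ≤ 1 ∧ r = (∑ i, |f (x i)| ^ t) ^ (1 / t)}}

/-- The Banach–Mazur distance between two normed spaces, as a value in `ℝ≥0∞`
(`∞` if they are not isomorphic). -/
def bmDist (X Y : Type*) [NormedAddCommGroup X] [NormedSpace ℝ X]
    [NormedAddCommGroup Y] [NormedSpace ℝ Y] : ℝ≥0∞ :=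
  sInf {c : ℝ≥0∞ | ∃ S : X ≃L[ℝ] Y,
    c = ENNReal.ofReal (‖(S : X →L[ℝ] Y)‖ * ‖(S.symm : Y →L[ℝ] X)‖)}

/-- `γ_1(S)`: the infimum of `‖A‖⬝‖B‖` over factorizations `S = B ∘ A` through a space
`L_1(ν)`, as a value in `ℝ≥0∞`. -/
def gammaLone {X Y : Type*} [NormedAddCommGroup X] [NormedSpace ℝ X]
    [NormedAddCommGroup Y] [NormedSpace ℝ Y] (S : X →L[ℝ] Y) : ℝ≥0∞ :=
  sInf {c : ℝ≥0∞ | ∃ (Ω : Type) (mΩ : MeasurableSpace Ω) (ν : @Measure Ω mΩ)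
    (A : X →L[ℝ] Lp ℝ 1 ν) (B : Lp ℝ 1 ν →L[ℝ] Y),
    B.comp A = S ∧ c = ENNReal.ofReal (‖A‖ * ‖B‖)}

/-- The Gordon–Lewis norm `gl(T)`, as a value in `ℝ≥0∞`. -/
def glNorm {X Y : Type*} [NormedAddCommGroup X] [NormedSpace ℝ X]
    [NormedAddCommGroup Y] [NormedSpace ℝ Y] (T : X →L[ℝ] Y) : ℝ≥0∞ :=
  sSup {c : ℝ≥0∞ | ∃ U : Y →L[ℝ] lp (fun _ : ℕ => ℝ) 2,
    piSum 1 U ≤ 1 ∧ c = gammaLone (U.comp T)}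

/-- The cotype-`q` constant of a normed space, as a value in `ℝ≥0∞`. -/
def cotypeConst (q : ℝ) (W : Type*) [NormedAddCommGroup W] [NormedSpace ℝ W] : ℝ≥0∞ :=
  sInf {c : ℝ≥0∞ | ∃ C : ℝ, 0 ≤ C ∧ c = ENNReal.ofReal C ∧
    ∀ (m : ℕ) (w : Fin m → W),
      (∑ i, ‖w i‖ ^ q) ^ (1 / q) ≤
        C * (((∑ ε : Fin m → Bool, ‖∑ i, (if ε i then (1 : ℝ) else -1) • w i‖ ^ 2) / 2 ^ m)
          ^ ((1 : ℝ) / 2))}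

/-- `q_W(n, β)`: the least `k` such that every operator `v` from `W` of rank `≤ n` admits a
finite rank operator `P : W → W` with `v ∘ P = v`, `‖P‖ ≤ β` and `rank P ≤ k`. -/
def qW (W : Type*) [NormedAddCommGroup W] [NormedSpace ℝ W] (n : ℕ) (β : ℝ) : ℕ∞ :=
  sInf {k : ℕ∞ | ∃ k' : ℕ, k = (k' : ℕ∞) ∧
    ∀ (E : Type) [NormedAddCommGroup E] [NormedSpace ℝ E] (v : W →L[ℝ] E),
      Module.rank ℝ (LinearMap.range v.toLinearMap) ≤ (n : Cardinal) →
      ∃ P : W →L[ℝ] W, v.comp P = v ∧ ‖P‖ ≤ β ∧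
        Module.rank ℝ (LinearMap.range P.toLinearMap) ≤ (k' : Cardinal)}

/-- The adjoint (dual) operator `v* : Y* → X*` of `v : X → Y`. -/
def opDual {X Y : Type*} [NormedAddCommGroup X] [NormedSpace ℝ X]
    [NormedAddCommGroup Y] [NormedSpace ℝ Y] (v : X →L[ℝ] Y) :
    (Y →L[ℝ] ℝ) →L[ℝ] (X →L[ℝ] ℝ) :=
  (ContinuousLinearMap.compL ℝ X Y ℝ).flip v

end


section Helpers


lemma weight_sum (m : ℕ) (p q : ℝ) (S : Finset (Fin m)) :
    ∑ I : Finset (Fin m), (if S ⊆ I then p ^ I.card * q ^ (m - I.card) else 0)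
      = p ^ S.card * (p + q) ^ (m - S.card) := by
  have h := Fintype.prod_add (fun _ : Fin m => p) (fun a : Fin m => if a ∈ S then 0 else q)
  have lhs : ∏ a : Fin m, (p + if a ∈ S then 0 else q) = p ^ S.card * (p + q) ^ (m - S.card) := by
    have : ∀ a : Fin m, (p + if a ∈ S then 0 else q) = if a ∈ S then p else p + q := by
      intro a; by_cases h : a ∈ S <;> simp [h]
    rw [Finset.prod_congr rfl fun a _ => this a, Finset.prod_ite, Finset.prod_const,
      Finset.prod_const]
    congr 2
    · simp
    · rw [show Finset.univ.filter (fun a => ¬ a ∈ S) = Sᶜ by ext a; simp,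
        Finset.card_compl, Fintype.card_fin]
  rw [lhs] at h
  rw [h]
  apply Finset.sum_congr rfl
  intro t _
  symm
  by_cases hSt : S ⊆ t
  · rw [if_pos hSt, Finset.prod_const]
    have : ∀ a ∈ tᶜ, (if a ∈ S then (0:ℝ) else q) = q := by
      intro a hat
      rw [if_neg]
      intro haS
      exact (Finset.mem_compl.mp hat) (hSt haS)
    rw [Finset.prod_congr rfl this, Finset.prod_const, Finset.card_compl, Fintype.card_fin]
  · rw [if_neg hSt]
    obtain ⟨x, hxS, hxt⟩ := Finset.not_subset.mp hSt
    have hz : (∏ a ∈ tᶜ, if a ∈ S then (0:ℝ) else q) = 0 :=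
      Finset.prod_eq_zero (Finset.mem_compl.mpr hxt) (if_pos hxS)
    rw [hz, mul_zero]

lemma select_subset (m : ℕ) (a : Fin m → Fin m → ℝ) (ha : ∀ i j, 0 ≤ a i j)
    {R δ : ℝ} (hδ0 : 0 < δ) (hδ1 : δ ≤ 1) (hR : 0 < R)
    (hcol : ∀ j, ∑ i ∈ Finset.univ.erase j, a i j ≤ R) :
    ∃ I : Finset (Fin m), (1/8) * δ * m ≤ (I.card : ℝ) ∧
      ∀ j ∈ I, ∑ i ∈ I.erase j, a i j ≤ δ * R / 2 := by
  set p : ℝ := δ / 4 with hp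
  set q : ℝ := 1 - p with hq
  have hp0 : 0 < p := by rw [hp]; linarith
  have hq0 : 0 < q := by rw [hq, hp]; linarith
  set w : Finset (Fin m) → ℝ := fun I => p ^ I.card * q ^ (m - I.card) with hwdef
  have hw0 : ∀ I, 0 < w I := fun I => by
    have := pow_pos hp0 I.card; have := pow_pos hq0 (m - I.card); positivity
  have hpq : p + q = 1 := by rw [hq]; ring
  have hW : ∑ I : Finset (Fin m), w I = 1 := by
    have h := weight_sum m p q ∅
    simpa [hpq] using h
  have hsingle : ∀ j : Fin m, ∑ I : Finset (Fin m), (if j ∈ I then w I else 0) = p := by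
    intro j
    have h := weight_sum m p q {j}
    simpa [hpq, Finset.singleton_subset_iff] using h
  have hpair : ∀ i j : Fin m, i ≠ j →
      ∑ I : Finset (Fin m), (if i ∈ I ∧ j ∈ I then w I else 0) = p ^ 2 := by
    intro i j hij
    have h2 := weight_sum m p q {i, j}
    rw [Finset.card_insert_of_notMem (by simp [hij]), Finset.card_singleton] at h2
    rw [hpq, one_pow, mul_one] at h2
    rw [← h2]
    apply Finset.sum_congr rfl
    intro I _
    have : ({i, j} : Finset (Fin m)) ⊆ I ↔ i ∈ I ∧ j ∈ I := by
      simp [Finset.insert_subset_iff]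
    simp only [this]
    rfl
  have E1 : ∑ I : Finset (Fin m), w I * I.card = p * m := by
    calc ∑ I : Finset (Fin m), w I * I.card
        = ∑ I : Finset (Fin m), ∑ j : Fin m, (if j ∈ I then w I else 0) := by
          apply Finset.sum_congr rfl; intro I _
          have : ((I.card : ℝ)) = ∑ j : Fin m, (if j ∈ I then (1:ℝ) else 0) := by
            rw [Finset.sum_ite_mem, Finset.univ_inter, Finset.sum_const, nsmul_eq_mul, mul_one]
          rw [this, Finset.mul_sum]
          apply Finset.sum_congr rfl; intro j _
          by_cases h : j ∈ I <;> simp [h]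
      _ = ∑ j : Fin m, ∑ I : Finset (Fin m), (if j ∈ I then w I else 0) := Finset.sum_comm
      _ = ∑ j : Fin m, p := Finset.sum_congr rfl fun j _ => hsingle j
      _ = p * m := by rw [Finset.sum_const, Finset.card_univ, Fintype.card_fin,
            nsmul_eq_mul, mul_comm]
  have inner : ∀ I : Finset (Fin m),
      ∑ j ∈ I, ∑ i ∈ I.erase j, a i j
        = ∑ j : Fin m, ∑ i ∈ Finset.univ.erase j, (if i ∈ I ∧ j ∈ I then a i j else 0) := by
    intro I
    have e1 : ∀ j : Fin m, (Finset.univ.erase j) ∩ I = I.erase j := by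
      intro j; ext x
      constructor
      · intro hx
        rw [Finset.mem_inter, Finset.mem_erase] at hx
        exact Finset.mem_erase.mpr ⟨hx.1.1, hx.2⟩
      · intro hx
        rw [Finset.mem_erase] at hx
        exact Finset.mem_inter.mpr ⟨Finset.mem_erase.mpr ⟨hx.1, Finset.mem_univ x⟩, hx.2⟩
    calc ∑ j ∈ I, ∑ i ∈ I.erase j, a i j
        = ∑ j : Fin m, (if j ∈ I then ∑ i ∈ I.erase j, a i j else 0) := by
          rw [Finset.sum_ite_mem, Finset.univ_inter]
      _ = ∑ j : Fin m, ∑ i ∈ Finset.univ.erase j, (if i ∈ I ∧ j ∈ I then a i j else 0) := by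
          apply Finset.sum_congr rfl; intro j _
          by_cases hj : j ∈ I
          · rw [if_pos hj, ← e1 j, ← Finset.sum_ite_mem]
            apply Finset.sum_congr rfl; intro i _
            simp [hj]
          · rw [if_neg hj]
            symm; apply Finset.sum_eq_zero; intro i _; simp [hj]
  have E2 : ∑ I : Finset (Fin m), w I * (∑ j ∈ I, ∑ i ∈ I.erase j, a i j)
      ≤ p ^ 2 * (m * R) := by
    calc ∑ I : Finset (Fin m), w I * (∑ j ∈ I, ∑ i ∈ I.erase j, a i j)
        = ∑ I : Finset (Fin m), ∑ j : Fin m, ∑ i ∈ Finset.univ.erase j,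
            (if i ∈ I ∧ j ∈ I then w I * a i j else 0) := by
          apply Finset.sum_congr rfl; intro I _
          rw [inner I, Finset.mul_sum]
          apply Finset.sum_congr rfl; intro j _
          rw [Finset.mul_sum]
          apply Finset.sum_congr rfl; intro i _
          by_cases h : i ∈ I ∧ j ∈ I <;> simp [h]
      _ = ∑ j : Fin m, ∑ i ∈ Finset.univ.erase j,
            ∑ I : Finset (Fin m), (if i ∈ I ∧ j ∈ I then w I * a i j else 0) := by
          rw [Finset.sum_comm]
          apply Finset.sum_congr rfl; intro j _
          rw [Finset.sum_comm]
      _ = ∑ j : Fin m, ∑ i ∈ Finset.univ.erase j, a i j * p ^ 2 := by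
          apply Finset.sum_congr rfl; intro j _
          apply Finset.sum_congr rfl; intro i hi
          have hij : i ≠ j := Finset.ne_of_mem_erase hi
          calc ∑ I : Finset (Fin m), (if i ∈ I ∧ j ∈ I then w I * a i j else 0)
              = ∑ I : Finset (Fin m), (if i ∈ I ∧ j ∈ I then w I else 0) * a i j := by
                apply Finset.sum_congr rfl; intro I _
                by_cases h : i ∈ I ∧ j ∈ I <;> simp [h, mul_comm]
            _ = a i j * p ^ 2 := by rw [← Finset.sum_mul, hpair i j hij, mul_comm]
      _ ≤ ∑ j : Fin m, R * p ^ 2 := by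
          apply Finset.sum_le_sum; intro j _
          rw [← Finset.sum_mul]
          exact mul_le_mul_of_nonneg_right (hcol j) (by positivity)
      _ = p ^ 2 * (m * R) := by
          rw [Finset.sum_const, Finset.card_univ, Fintype.card_fin, nsmul_eq_mul]; ring
  set c : ℝ := 2 / (δ * R) with hc
  have hc0 : 0 < c := by rw [hc]; positivity
  have key : ∃ I : Finset (Fin m),
      (1/8) * δ * m ≤ (I.card : ℝ) - c * ∑ j ∈ I, ∑ i ∈ I.erase j, a i j := by
    by_contra hcon
    push_neg at hcon
    have hlt : ∑ I : Finset (Fin m),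
        w I * ((I.card : ℝ) - c * ∑ j ∈ I, ∑ i ∈ I.erase j, a i j)
        < ∑ I : Finset (Fin m), w I * ((1/8) * δ * m) :=
      Finset.sum_lt_sum_of_nonempty Finset.univ_nonempty
        (fun I _ => mul_lt_mul_of_pos_left (hcon I) (hw0 I))
    have e3 : ∑ I : Finset (Fin m), w I * ((1/8) * δ * m) = (1/8) * δ * m := by
      rw [← Finset.sum_mul, hW, one_mul]
    have e4 : ∑ I : Finset (Fin m),
        w I * ((I.card : ℝ) - c * ∑ j ∈ I, ∑ i ∈ I.erase j, a i j)
        = p * m - c * ∑ I : Finset (Fin m), w I * (∑ j ∈ I, ∑ i ∈ I.erase j, a i j) := by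
      have hterm : ∀ I : Finset (Fin m),
          w I * ((I.card : ℝ) - c * ∑ j ∈ I, ∑ i ∈ I.erase j, a i j)
          = w I * I.card - c * (w I * ∑ j ∈ I, ∑ i ∈ I.erase j, a i j) := fun I => by ring
      rw [Finset.sum_congr rfl fun I _ => hterm I, Finset.sum_sub_distrib, E1, ← Finset.mul_sum]
    have e5 : p * m - c * (p ^ 2 * (m * R)) = (1/8) * δ * m := by
      rw [hc, hp]; field_simp; ring
    have hE2' : c * ∑ I : Finset (Fin m), w I * (∑ j ∈ I, ∑ i ∈ I.erase j, a i j)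
        ≤ c * (p ^ 2 * (m * R)) := mul_le_mul_of_nonneg_left E2 hc0.le
    rw [e3, e4] at hlt
    linarith
  obtain ⟨I, hI⟩ := key
  classical
  refine ⟨I.filter (fun j => ∑ i ∈ I.erase j, a i j ≤ δ * R / 2), ?_, ?_⟩
  · set I' := I.filter (fun j => ∑ i ∈ I.erase j, a i j ≤ δ * R / 2) with hI'
    set Ibad := I.filter (fun j => ¬ ∑ i ∈ I.erase j, a i j ≤ δ * R / 2) with hIbad
    have hsplit : (I.card : ℝ) = I'.card + Ibad.card := by
      rw [← Nat.cast_add]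
      norm_cast
      rw [hI', hIbad, Finset.card_filter_add_card_filter_not]
    have hbadsum : (Ibad.card : ℝ) * (δ * R / 2) ≤ ∑ j ∈ Ibad, ∑ i ∈ I.erase j, a i j := by
      have := Finset.card_nsmul_le_sum Ibad (fun j => ∑ i ∈ I.erase j, a i j) (δ * R / 2)
        (fun j hj => (le_of_lt (lt_of_not_ge (Finset.mem_filter.mp hj).2)))
      rwa [nsmul_eq_mul] at this
    have hsub : ∑ j ∈ Ibad, ∑ i ∈ I.erase j, a i j ≤ ∑ j ∈ I, ∑ i ∈ I.erase j, a i j := by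
      apply Finset.sum_le_sum_of_subset_of_nonneg (Finset.filter_subset _ _)
      intro j _ _
      exact Finset.sum_nonneg fun i _ => ha i j
    have hcval : c * (δ * R / 2) = 1 := by
      rw [hc]; field_simp
    have : (Ibad.card : ℝ) ≤ c * ∑ j ∈ I, ∑ i ∈ I.erase j, a i j := by
      calc (Ibad.card : ℝ) = (Ibad.card : ℝ) * (c * (δ * R / 2)) := by rw [hcval, mul_one]
        _ = c * ((Ibad.card : ℝ) * (δ * R / 2)) := by ring
        _ ≤ c * ∑ j ∈ Ibad, ∑ i ∈ I.erase j, a i j :=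
            mul_le_mul_of_nonneg_left hbadsum hc0.le
        _ ≤ c * ∑ j ∈ I, ∑ i ∈ I.erase j, a i j :=
            mul_le_mul_of_nonneg_left hsub hc0.le
    linarith
  · intro j hj
    rw [Finset.mem_filter] at hj
    refine le_trans (Finset.sum_le_sum_of_subset_of_nonneg
      (Finset.erase_subset_erase _ (Finset.filter_subset _ _)) ?_) hj.2
    intro i _ _
    exact ha i j


variable {Ω : Type*} [MeasurableSpace Ω] {μ : Measure Ω}


lemma L1norm_eq (f : Lp ℝ 1 μ) : ‖f‖ = ∫ x, |(f : Ω → ℝ) x| ∂μ := by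
  rw [Lp.norm_def, eLpNorm_one_eq_lintegral_enorm,
    ← integral_norm_eq_lintegral_enorm (Lp.stronglyMeasurable f).aestronglyMeasurable]
  simp [Real.norm_eq_abs]

lemma toReal_eLpNorm_indicator (f : Lp ℝ 1 μ) (G : Set Ω) (hG : MeasurableSet G) :
    (eLpNorm (G.indicator (f : Ω → ℝ)) 1 μ).toReal = ∫ x in G, |(f : Ω → ℝ) x| ∂μ := by
  rw [eLpNorm_one_eq_lintegral_enorm,
    ← integral_norm_eq_lintegral_enorm (((Lp.stronglyMeasurable f).indicator hG).aestronglyMeasurable)]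
  rw [← integral_indicator hG]
  congr 1
  ext x
  rw [norm_indicator_eq_indicator_norm]
  simp [Real.norm_eq_abs]

lemma integrable_bdd_mul (g : Ω → ℝ) (hgm : Measurable g) (hg1 : ∀ x, |g x| ≤ 1)
    (f : Lp ℝ 1 μ) : Integrable (fun x => g x * (f : Ω → ℝ) x) μ :=
  (L1.integrable_coeFn f).bdd_mul hgm.aestronglyMeasurable
    (c := 1) (Filter.Eventually.of_forall fun x => by simpa [Real.norm_eq_abs] using hg1 x)

lemma abs_integral_mul_le (G : Set Ω) (hG : MeasurableSet G) (g : Ω → ℝ)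
    (hgm : Measurable g) (hg1 : ∀ x, |g x| ≤ 1) (hg0 : ∀ x ∉ G, g x = 0)
    (f : Lp ℝ 1 μ) :
    |∫ x, g x * (f : Ω → ℝ) x ∂μ| ≤ ∫ x in G, |(f : Ω → ℝ) x| ∂μ := by
  have hint := integrable_bdd_mul g hgm hg1 f
  calc |∫ x, g x * (f : Ω → ℝ) x ∂μ| ≤ ∫ x, |g x| * |(f : Ω → ℝ) x| ∂μ := by
        simpa [Real.norm_eq_abs] using norm_integral_le_integral_norm (μ := μ)
          (fun x => g x * (f : Ω → ℝ) x)
    _ ≤ ∫ x, G.indicator (fun x => |(f : Ω → ℝ) x|) x ∂μ := by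
        have hint2 : Integrable (fun x => |g x| * |(f : Ω → ℝ) x|) μ := by
          have := hint.abs
          simpa [abs_mul] using this
        apply integral_mono hint2 ((L1.integrable_coeFn f).abs.indicator hG)
        intro x
        show |g x| * |(f : Ω → ℝ) x| ≤ _
        by_cases hx : x ∈ G
        · rw [Set.indicator_of_mem hx]
          exact mul_le_of_le_one_left (abs_nonneg _) (hg1 x)
        · rw [Set.indicator_of_notMem hx, hg0 x hx, abs_zero, zero_mul]
    _ = ∫ x in G, |(f : Ω → ℝ) x| ∂μ := integral_indicator hG

lemma exists_phi (G : Set Ω) (hG : MeasurableSet G) (g : Ω → ℝ)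
    (hgm : Measurable g) (hg1 : ∀ x, |g x| ≤ 1) :
    ∃ φ : Lp ℝ 1 μ →L[ℝ] ℝ, ∀ f : Lp ℝ 1 μ, φ f = ∫ x, g x * (f : Ω → ℝ) x ∂μ := by
  have hb : ∀ f : Lp ℝ 1 μ, |∫ x, g x * (f : Ω → ℝ) x ∂μ| ≤ ∫ x, |(f : Ω → ℝ) x| ∂μ := by
    intro f
    have hint := integrable_bdd_mul g hgm hg1 f
    calc |∫ x, g x * (f : Ω → ℝ) x ∂μ| ≤ ∫ x, |g x| * |(f : Ω → ℝ) x| ∂μ := by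
          simpa [Real.norm_eq_abs] using norm_integral_le_integral_norm (μ := μ)
            (fun x => g x * (f : Ω → ℝ) x)
      _ ≤ ∫ x, |(f : Ω → ℝ) x| ∂μ := by
          have hint2 : Integrable (fun x => |g x| * |(f : Ω → ℝ) x|) μ := by
            have := hint.abs
            simpa [abs_mul] using this
          apply integral_mono hint2 (L1.integrable_coeFn f).abs
          intro x
          show |g x| * |(f : Ω → ℝ) x| ≤ _
          exact mul_le_of_le_one_left (abs_nonneg _) (hg1 x)
  let φl : Lp ℝ 1 μ →ₗ[ℝ] ℝ :=
    { toFun := fun f => ∫ x, g x * (f : Ω → ℝ) x ∂μ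
      map_add' := by
        intro f1 f2
        have h1 : ∀ᵐ x ∂μ, g x * ((f1 + f2 : Lp ℝ 1 μ) : Ω → ℝ) x
            = g x * (f1 : Ω → ℝ) x + g x * (f2 : Ω → ℝ) x := by
          filter_upwards [Lp.coeFn_add f1 f2] with x hx
          rw [hx]; simp; ring
        show ∫ x, g x * ((f1 + f2 : Lp ℝ 1 μ) : Ω → ℝ) x ∂μ = _
        rw [integral_congr_ae h1,
          integral_add (integrable_bdd_mul g hgm hg1 f1) (integrable_bdd_mul g hgm hg1 f2)]
      map_smul' := by
        intro c f
        have h1 : ∀ᵐ x ∂μ, g x * ((c • f : Lp ℝ 1 μ) : Ω → ℝ) x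
            = c * (g x * (f : Ω → ℝ) x) := by
          filter_upwards [Lp.coeFn_smul c f] with x hx
          rw [hx]; simp; ring
        show ∫ x, g x * ((c • f : Lp ℝ 1 μ) : Ω → ℝ) x ∂μ = _
        rw [integral_congr_ae h1, integral_const_mul]
        rfl }
  refine ⟨φl.mkContinuous 1 (fun f => ?_), fun f => rfl⟩
  rw [one_mul]
  calc ‖φl f‖ = |∫ x, g x * (f : Ω → ℝ) x ∂μ| := by simp [φl, Real.norm_eq_abs]
    _ ≤ ∫ x, |(f : Ω → ℝ) x| ∂μ := hb f
    _ = ‖f‖ := (L1norm_eq f).symm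

lemma sum_setIntegral_abs_le {k : ℕ} (G : Fin k → Set Ω) (hG : ∀ i, MeasurableSet (G i))
    (hdisj : Pairwise (Function.onFun Disjoint G)) (f : Lp ℝ 1 μ) :
    ∑ i, ∫ x in G i, |(f : Ω → ℝ) x| ∂μ ≤ ∫ x, |(f : Ω → ℝ) x| ∂μ := by
  have hint : Integrable (fun x => |(f : Ω → ℝ) x|) μ := (L1.integrable_coeFn f).abs
  rw [← MeasureTheory.integral_biUnion_finset Finset.univ (fun i _ => hG i)
    (fun i _ j _ hij => hdisj hij) (fun i _ => hint.integrableOn)]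
  exact setIntegral_le_integral hint (Filter.Eventually.of_forall fun x => abs_nonneg _)


lemma ellOne_norm {k : ℕ} (x : ellOne k) : ‖x‖ = ∑ i, |x i| := by
  rw [PiLp.norm_eq_sum (by norm_num : 0 < (1 : ℝ≥0∞).toReal)]
  simp [Real.norm_eq_abs]


lemma offdiag_swap {n : ℕ} (f : Fin n → Fin n → ℝ) :
    ∑ i, ∑ j ∈ Finset.univ.erase i, f i j = ∑ j, ∑ i ∈ Finset.univ.erase j, f i j := by
  have key : ∀ (i : Fin n) (g : Fin n → ℝ),
      ∑ j ∈ Finset.univ.erase i, g j = ∑ j : Fin n, (if j ≠ i then g j else 0) := by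
    intro i g
    rw [← Finset.filter_ne', Finset.sum_filter]
  calc ∑ i, ∑ j ∈ Finset.univ.erase i, f i j
      = ∑ i, ∑ j : Fin n, (if j ≠ i then f i j else 0) :=
        Finset.sum_congr rfl fun i _ => key i (f i)
    _ = ∑ j, ∑ i : Fin n, (if j ≠ i then f i j else 0) := Finset.sum_comm
    _ = ∑ j, ∑ i ∈ Finset.univ.erase j, f i j := by
        apply Finset.sum_congr rfl
        intro j _
        rw [key j (fun i => f i j)]
        apply Finset.sum_congr rfl
        intro i _
        by_cases h : i = j
        · subst h; simp
        · simp [h, Ne.symm h]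

lemma exists_inverse {E : Type*} [NormedAddCommGroup E] [NormedSpace ℝ E] [CompleteSpace E]
    (S : E →L[ℝ] E) (h : ‖1 - S‖ ≤ 1/2) :
    ∃ V : E →L[ℝ] E, S.comp V = 1 ∧ ‖V‖ ≤ 2 := by
  have h1 : ‖1 - S‖ < 1 := lt_of_le_of_lt h (by norm_num)
  let u := Units.oneSub (1 - S) h1
  have huval : (u : E →L[ℝ] E) = S := by
    show 1 - (1 - S) = S
    exact sub_sub_cancel 1 S
  refine ⟨((u⁻¹ : (E →L[ℝ] E)ˣ) : E →L[ℝ] E), ?_, ?_⟩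
  · have := u.mul_inv
    rw [huval] at this
    exact this
  · have hval : ((u⁻¹ : (E →L[ℝ] E)ˣ) : E →L[ℝ] E) = ∑' n : ℕ, (1 - S) ^ n := rfl
    rw [hval]
    have hb := tsum_geometric_le_of_norm_lt_one (1 - S) h1
    have hone : ‖(1 : E →L[ℝ] E)‖ ≤ 1 := ContinuousLinearMap.norm_id_le
    have hinv : (1 - ‖1 - S‖)⁻¹ ≤ 2 := by
      have h2 : (1:ℝ)/2 ≤ 1 - ‖1 - S‖ := by linarith
      calc (1 - ‖1 - S‖)⁻¹ ≤ ((1:ℝ)/2)⁻¹ := by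
            apply inv_anti₀ (by norm_num) h2
        _ = 2 := by norm_num
    linarith

end Helpers

set_option maxHeartbeats 1000000 in
theorem statement1
    {Ω : Type*} [MeasurableSpace Ω] {μ : MeasureTheory.Measure Ω}
    {Z : Type*} [NormedAddCommGroup Z] [NormedSpace ℝ Z] [CompleteSpace Z]
    (T : Z →L[ℝ] Lp ℝ 1 μ) (m : ℕ) (δ : ℝ)
    (z : Fin m → Z) (F : Fin m → Set Ω)
    (hz : ∀ i, ‖z i‖ ≤ 1) (hF : ∀ i, MeasurableSet (F i))
    (hdisj : Pairwise (Function.onFun Disjoint F))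
    (hpos : 0 < δ * ‖T‖)
    (hlow : ∀ i, (eLpNorm ((F i).indicator (T (z i) : Ω → ℝ)) 1 μ).toReal ≥ δ * ‖T‖) :
    ∃ k : ℕ, (k : ℝ) ≥ (1 / 8) * δ * m ∧
      ∃ (A : ellOne k →L[ℝ] Z) (B : Lp ℝ 1 μ →L[ℝ] ellOne k),
        B.comp (T.comp A) = ContinuousLinearMap.id ℝ (ellOne k) ∧
        ‖A‖ * ‖B‖ * ‖T‖ ≤ 2 * δ⁻¹ ∧
        gammaFac T (ContinuousLinearMap.id ℝ (ellOne k)) ≤ ENNReal.ofReal (2 * δ⁻¹ * ‖T‖⁻¹) := by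
  
  classical
  have hT : 0 < ‖T‖ := by
    rcases lt_or_eq_of_le (norm_nonneg T) with h | h
    · exact h
    · exfalso; rw [← h] at hpos; simp at hpos
  have hδ : 0 < δ := by
    by_contra hcon
    push_neg at hcon
    have : δ * ‖T‖ ≤ 0 := mul_nonpos_of_nonpos_of_nonneg hcon (norm_nonneg T)
    linarith
  rcases Nat.eq_zero_or_pos m with hm | hm
  · -- trivial case m = 0
    subst hm
    have hx0 : ∀ y : ellOne 0, y = 0 := fun y => by
      have : ‖y‖ = 0 := by rw [ellOne_norm]; simp
      exact norm_eq_zero.mp this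
    have hident : (0 : Lp ℝ 1 μ →L[ℝ] ellOne 0).comp (T.comp (0 : ellOne 0 →L[ℝ] Z))
        = ContinuousLinearMap.id ℝ (ellOne 0) :=
      ContinuousLinearMap.ext fun x => (hx0 _).trans (hx0 _).symm
    refine ⟨0, by simp, 0, 0, hident, ?_, ?_⟩
    · simp only [norm_zero, zero_mul, mul_zero]
      positivity
    · refine le_trans (sInf_le ⟨0, 0, hident, rfl⟩) ?_
      simp only [norm_zero, zero_mul, mul_zero, ENNReal.ofReal_zero]
      exact bot_le
  -- main case
  set a : Fin m → Fin m → ℝ := fun i j => ∫ x in F i, |(T (z j) : Ω → ℝ) x| ∂μ with ha_def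
  have ha : ∀ i j, 0 ≤ a i j := fun i j => integral_nonneg fun x => abs_nonneg _
  have hdiaglow : ∀ i, δ * ‖T‖ ≤ a i i := fun i => by
    have h := hlow i
    rwa [toReal_eLpNorm_indicator (T (z i)) (F i) (hF i)] at h
  have hnormTz : ∀ j, ∫ x, |(T (z j) : Ω → ℝ) x| ∂μ ≤ ‖T‖ := fun j => by
    rw [← L1norm_eq]
    calc ‖T (z j)‖ ≤ ‖T‖ * ‖z j‖ := T.le_opNorm _
      _ ≤ ‖T‖ * 1 := mul_le_mul_of_nonneg_left (hz j) (norm_nonneg T)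
      _ = ‖T‖ := mul_one _
  have hδ1 : δ ≤ 1 := by
    have h0 := hdiaglow ⟨0, hm⟩
    have h1 : a ⟨0, hm⟩ ⟨0, hm⟩ ≤ ‖T‖ := by
      refine le_trans ?_ (hnormTz ⟨0, hm⟩)
      exact setIntegral_le_integral (L1.integrable_coeFn _).abs
        (Filter.Eventually.of_forall fun x => abs_nonneg _)
    nlinarith
  have hcol : ∀ j, ∑ i ∈ Finset.univ.erase j, a i j ≤ ‖T‖ := fun j => by
    refine le_trans (Finset.sum_le_sum_of_subset_of_nonneg (Finset.subset_univ _)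
      (fun i _ _ => ha i j)) ?_
    exact le_trans (sum_setIntegral_abs_le F hF hdisj (T (z j))) (hnormTz j)
  obtain ⟨I, hIcard, hIoff⟩ := select_subset m a ha hδ hδ1 hT hcol
  set k := I.card with hk
  set s : Fin k → Fin m := fun i => ((I.orderIsoOfFin hk.symm) i : Fin m) with hs
  have hsmem : ∀ i, s i ∈ I := fun i => ((I.orderIsoOfFin hk.symm) i).2
  have hsinj : Function.Injective s := fun i j hij =>
    (I.orderIsoOfFin hk.symm).injective (Subtype.ext hij)
  -- sign functions and functionals
  have hsgn : ∀ j : Fin m, ∃ g : Ω → ℝ, Measurable g ∧ (∀ x, |g x| ≤ 1) ∧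
      (∀ x ∉ F j, g x = 0) ∧
      ∀ x, g x * (T (z j) : Ω → ℝ) x
        = (F j).indicator (fun x => |(T (z j) : Ω → ℝ) x|) x := by
    intro j
    refine ⟨(F j).indicator (fun x => if (T (z j) : Ω → ℝ) x < 0 then -1 else 1),
      ?_, ?_, ?_, ?_⟩
    · exact (Measurable.ite
        (measurableSet_lt (Lp.stronglyMeasurable (T (z j))).measurable measurable_const)
        measurable_const measurable_const).indicator (hF j)
    · intro x
      by_cases hx : x ∈ F j
      · rw [Set.indicator_of_mem hx]; split <;> norm_num
      · rw [Set.indicator_of_notMem hx]; norm_num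
    · intro x hx; exact Set.indicator_of_notMem hx _
    · intro x
      by_cases hx : x ∈ F j
      · rw [Set.indicator_of_mem hx, Set.indicator_of_mem hx]
        split_ifs with h
        · rw [abs_of_neg h]; ring
        · rw [abs_of_nonneg (not_lt.mp h)]; ring
      · rw [Set.indicator_of_notMem hx, Set.indicator_of_notMem hx, zero_mul]
  choose g hgm hg1 hg0 hgmul using hsgn
  choose φ hφ using fun j => exists_phi (μ := μ) (F j) (hF j) (g j) (hgm j) (hg1 j)
  have hφb : ∀ (j : Fin m) (f : Lp ℝ 1 μ), |φ j f| ≤ ∫ x in F j, |(f : Ω → ℝ) x| ∂μ :=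
    fun j f => by
      rw [hφ j f]
      exact abs_integral_mul_le (F j) (hF j) (g j) (hgm j) (hg1 j) (hg0 j) f
  have hφdiag : ∀ j, φ j (T (z j)) = a j j := fun j => by
    rw [hφ j (T (z j)),
      integral_congr_ae (Filter.Eventually.of_forall (hgmul j)), integral_indicator (hF j)]
  have hδT : 0 < δ * ‖T‖ := hpos
  have hdpos : ∀ j, 0 < a j j := fun j => lt_of_lt_of_le hδT (hdiaglow j)
  have hdle : ∀ j, (a j j)⁻¹ ≤ (δ * ‖T‖)⁻¹ := fun j => inv_anti₀ hδT (hdiaglow j)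
  -- the operator A0
  let A0l : ellOne k →ₗ[ℝ] Z :=
    { toFun := fun x => ∑ i, x i • z (s i)
      map_add' := fun x y => by
        simp only [PiLp.add_apply, add_smul]
        rw [Finset.sum_add_distrib]
      map_smul' := fun c x => by
        simp only [PiLp.smul_apply, smul_eq_mul, RingHom.id_apply]
        rw [Finset.smul_sum]
        simp [smul_smul] }
  have hA0b : ∀ x : ellOne k, ‖A0l x‖ ≤ 1 * ‖x‖ := fun x => by
    rw [one_mul, ellOne_norm]
    calc ‖∑ i, x i • z (s i)‖ ≤ ∑ i, ‖x i • z (s i)‖ := norm_sum_le _ _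
      _ ≤ ∑ i, |x i| := by
          apply Finset.sum_le_sum; intro i _
          rw [norm_smul, Real.norm_eq_abs]
          exact mul_le_of_le_one_right (abs_nonneg _) (hz (s i))
  let A0 : ellOne k →L[ℝ] Z := A0l.mkContinuous 1 hA0b
  have hA0n : ‖A0‖ ≤ 1 := A0l.mkContinuous_norm_le zero_le_one hA0b
  have hA0app : ∀ x : ellOne k, A0 x = ∑ i, x i • z (s i) := fun x => rfl
  -- the operator B
  let Bl : Lp ℝ 1 μ →ₗ[ℝ] ellOne k :=
    { toFun := fun f => (WithLp.equiv 1 (Fin k → ℝ)).symm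
        (fun i => (a (s i) (s i))⁻¹ * φ (s i) f)
      map_add' := fun f1 f2 => by
        ext i
        simp [mul_add]
      map_smul' := fun c f => by
        ext i
        simp
        ring }
  have hBlapp : ∀ (f : Lp ℝ 1 μ) (i : Fin k), Bl f i = (a (s i) (s i))⁻¹ * φ (s i) f :=
    fun f i => rfl
  have hBb : ∀ f : Lp ℝ 1 μ, ‖Bl f‖ ≤ (δ * ‖T‖)⁻¹ * ‖f‖ := fun f => by
    rw [ellOne_norm]
    have hdisjs : Pairwise (Function.onFun Disjoint (fun i => F (s i))) :=
      fun i j hij => hdisj (fun h => hij (hsinj h))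
    calc ∑ i, |Bl f i| = ∑ i, |(a (s i) (s i))⁻¹ * φ (s i) f| := by
          apply Finset.sum_congr rfl; intro i _; rw [hBlapp]
      _ ≤ ∑ i, (δ * ‖T‖)⁻¹ * ∫ x in F (s i), |(f : Ω → ℝ) x| ∂μ := by
          apply Finset.sum_le_sum; intro i _
          rw [abs_mul, abs_inv, abs_of_pos (hdpos (s i))]
          exact mul_le_mul (hdle (s i)) (hφb (s i) f) (abs_nonneg _) (by positivity)
      _ = (δ * ‖T‖)⁻¹ * ∑ i, ∫ x in F (s i), |(f : Ω → ℝ) x| ∂μ := by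
          rw [Finset.mul_sum]
      _ ≤ (δ * ‖T‖)⁻¹ * ∫ x, |(f : Ω → ℝ) x| ∂μ := by
          apply mul_le_mul_of_nonneg_left ?_ (by positivity)
          exact sum_setIntegral_abs_le (fun i => F (s i)) (fun i => hF (s i)) hdisjs f
      _ = (δ * ‖T‖)⁻¹ * ‖f‖ := by rw [L1norm_eq]
  let B : Lp ℝ 1 μ →L[ℝ] ellOne k := Bl.mkContinuous ((δ * ‖T‖)⁻¹) hBb
  have hBn : ‖B‖ ≤ (δ * ‖T‖)⁻¹ := Bl.mkContinuous_norm_le (by positivity) hBb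
  have hBapp : ∀ (f : Lp ℝ 1 μ) (i : Fin k), B f i = (a (s i) (s i))⁻¹ * φ (s i) f :=
    fun f i => rfl
  -- the matrix
  set M : Fin k → Fin k → ℝ := fun i j => (a (s i) (s i))⁻¹ * φ (s i) (T (z (s j))) with hM
  set S : ellOne k →L[ℝ] ellOne k := B.comp (T.comp A0) with hS
  have hSapp : ∀ (x : ellOne k) (i : Fin k), S x i = ∑ j, x j * M i j := by
    intro x i
    have h1 : S x i = (a (s i) (s i))⁻¹ * φ (s i) (T (A0 x)) := hBapp (T (A0 x)) i
    have h2 : T (A0 x) = ∑ j, x j • T (z (s j)) := by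
      rw [hA0app, map_sum]
      exact Finset.sum_congr rfl fun j _ => T.map_smul _ _
    rw [h1, h2, map_sum, Finset.mul_sum]
    apply Finset.sum_congr rfl
    intro j _
    rw [ContinuousLinearMap.map_smul, smul_eq_mul, hM]
    ring
  have hMdiag : ∀ i, M i i = 1 := fun i => by
    rw [hM]
    simp only []
    rw [hφdiag (s i), inv_mul_cancel₀ (ne_of_gt (hdpos (s i)))]
  have hMabs : ∀ i j, |M i j| ≤ (δ * ‖T‖)⁻¹ * a (s i) (s j) := fun i j => by
    rw [hM]
    simp only []
    rw [abs_mul, abs_inv, abs_of_pos (hdpos (s i))]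
    exact mul_le_mul (hdle (s i)) (hφb (s i) (T (z (s j)))) (abs_nonneg _) (by positivity)
  have hMcol : ∀ j, ∑ i ∈ Finset.univ.erase j, |M i j| ≤ 1/2 := fun j => by
    calc ∑ i ∈ Finset.univ.erase j, |M i j|
        ≤ ∑ i ∈ Finset.univ.erase j, (δ * ‖T‖)⁻¹ * a (s i) (s j) :=
          Finset.sum_le_sum fun i _ => hMabs i j
      _ = (δ * ‖T‖)⁻¹ * ∑ i ∈ Finset.univ.erase j, a (s i) (s j) := by rw [Finset.mul_sum]
      _ ≤ (δ * ‖T‖)⁻¹ * (δ * ‖T‖ / 2) := by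
          apply mul_le_mul_of_nonneg_left ?_ (by positivity)
          have himg : ∑ ι ∈ (Finset.univ.erase j).image s, (fun ι => a ι (s j)) ι
              = ∑ i ∈ Finset.univ.erase j, (fun ι => a ι (s j)) (s i) :=
            Finset.sum_image (fun x _ y _ h => hsinj h)
          simp only [] at himg
          rw [← himg]
          refine le_trans (Finset.sum_le_sum_of_subset_of_nonneg ?_
            (fun ι _ _ => ha ι (s j))) (hIoff (s j) (hsmem j))
          intro ι hι
          obtain ⟨i, hi, rfl⟩ := Finset.mem_image.mp hι
          exact Finset.mem_erase.mpr ⟨fun h => (Finset.mem_erase.mp hi).1 (hsinj h), hsmem i⟩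
      _ = 1/2 := by field_simp
  have hSnorm : ‖S - ContinuousLinearMap.id ℝ (ellOne k)‖ ≤ 1/2 := by
    apply ContinuousLinearMap.opNorm_le_bound _ (by norm_num)
    intro x
    have coord : ∀ i : Fin k, (S - ContinuousLinearMap.id ℝ (ellOne k)) x i
        = ∑ j ∈ Finset.univ.erase i, x j * M i j := by
      intro i
      have h1 : (S - ContinuousLinearMap.id ℝ (ellOne k)) x i = S x i - x i := by
        rw [ContinuousLinearMap.sub_apply]
        simp [PiLp.sub_apply]
      rw [h1, hSapp]
      have h2 := Finset.sum_erase_add Finset.univ (fun j => x j * M i j) (Finset.mem_univ i)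
      rw [← h2]
      simp only [hMdiag i, mul_one]
      ring
    rw [ellOne_norm, ellOne_norm]
    calc ∑ i, |(S - ContinuousLinearMap.id ℝ (ellOne k)) x i|
        = ∑ i, |∑ j ∈ Finset.univ.erase i, x j * M i j| := by
          apply Finset.sum_congr rfl; intro i _; rw [coord i]
      _ ≤ ∑ i, ∑ j ∈ Finset.univ.erase i, |x j| * |M i j| := by
          apply Finset.sum_le_sum; intro i _
          refine le_trans (Finset.abs_sum_le_sum_abs _ _) ?_
          apply Finset.sum_le_sum; intro j _
          rw [abs_mul]
      _ = ∑ j, ∑ i ∈ Finset.univ.erase j, |x j| * |M i j| :=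
          offdiag_swap (fun i j => |x j| * |M i j|)
      _ ≤ ∑ j, |x j| * (1/2) := by
          apply Finset.sum_le_sum; intro j _
          rw [← Finset.mul_sum]
          exact mul_le_mul_of_nonneg_left (hMcol j) (abs_nonneg _)
      _ = 1/2 * ∑ j, |x j| := by rw [← Finset.sum_mul]; ring
  have hone : ‖(1 : ellOne k →L[ℝ] ellOne k) - S‖ ≤ 1/2 := by
    rw [ContinuousLinearMap.one_def, norm_sub_rev]
    exact hSnorm
  obtain ⟨V, hSV, hVn⟩ := exists_inverse S hone
  refine ⟨k, ?_, A0.comp V, B, ?_, ?_, ?_⟩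
  · rw [ge_iff_le]
    exact hIcard
  · apply ContinuousLinearMap.ext
    intro x
    have h := ContinuousLinearMap.ext_iff.mp hSV x
    simp only [ContinuousLinearMap.comp_apply, ContinuousLinearMap.one_apply] at h ⊢
    rw [ContinuousLinearMap.id_apply]
    exact h
  · have hAn : ‖A0.comp V‖ ≤ 2 := by
      refine le_trans (ContinuousLinearMap.opNorm_comp_le _ _) ?_
      nlinarith [norm_nonneg V]
    have h1 : ‖A0.comp V‖ * ‖B‖ ≤ 2 * (δ * ‖T‖)⁻¹ :=
      mul_le_mul hAn hBn (norm_nonneg _) (by norm_num)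
    calc ‖A0.comp V‖ * ‖B‖ * ‖T‖ ≤ 2 * (δ * ‖T‖)⁻¹ * ‖T‖ :=
          mul_le_mul_of_nonneg_right h1 (norm_nonneg T)
      _ = 2 * δ⁻¹ := by field_simp
  · have hident : B.comp (T.comp (A0.comp V)) = ContinuousLinearMap.id ℝ (ellOne k) := by
      apply ContinuousLinearMap.ext
      intro x
      have h := ContinuousLinearMap.ext_iff.mp hSV x
      simp only [ContinuousLinearMap.comp_apply, ContinuousLinearMap.one_apply] at h ⊢
      rw [ContinuousLinearMap.id_apply]
      exact h
    refine le_trans (sInf_le ⟨A0.comp V, B, hident, rfl⟩) ?_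
    apply ENNReal.ofReal_le_ofReal
    have hAn : ‖A0.comp V‖ ≤ 2 := by
      refine le_trans (ContinuousLinearMap.opNorm_comp_le _ _) ?_
      nlinarith [norm_nonneg V]
    have h1 : ‖A0.comp V‖ * ‖B‖ ≤ 2 * (δ * ‖T‖)⁻¹ :=
      mul_le_mul hAn hBn (norm_nonneg _) (by norm_num)
    have h2 : 2 * (δ * ‖T‖)⁻¹ = 2 * δ⁻¹ * ‖T‖⁻¹ := by
      rw [mul_inv]; ring
    linarith
end

section
/- Let V : ℓ_∞^m → X be a bounded linear operator of norm 1 into a Banach space X such that ‖V e_i‖ ≥ δ > 0 for each coordinate unit vector e_i, i = 1, …, m. Then γ_V(ℓ_∞^k) ≤ 2·δ^{−1} for some natural number k ≥ (1/8)·δ·m. -/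
open MeasureTheory ENNReal

noncomputable section AuxProof
open Finset

noncomputable def eInf (m : ℕ) (j : Fin m) : ellInf m := (WithLp.equiv ⊤ (Fin m → ℝ)).symm (Pi.single j 1)

lemma eInf_apply {m : ℕ} (j i : Fin m) : eInf m j i = if i = j then 1 else 0 := by
  show (Pi.single j (1:ℝ) : Fin m → ℝ) i = _
  rw [Pi.single_apply]

lemma ellInf_norm_le {n : ℕ} (x : ellInf n) {C : ℝ} (hC : 0 ≤ C) (h : ∀ i, |x i| ≤ C) : ‖x‖ ≤ C := by
  rw [PiLp.norm_eq_ciSup]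
  exact Real.iSup_le (fun i => (Real.norm_eq_abs (x i)) ▸ h i) hC

lemma ellInf_abs_le_norm {n : ℕ} (x : ellInf n) (i : Fin n) : |x i| ≤ ‖x‖ := by
  rw [PiLp.norm_eq_ciSup, ← Real.norm_eq_abs]
  exact le_ciSup (f := fun i => ‖x i‖) (Set.Finite.bddAbove (Set.finite_range _)) i

lemma eInf_norm_le {m : ℕ} (j : Fin m) : ‖eInf m j‖ ≤ 1 := by
  refine ellInf_norm_le _ zero_le_one fun i => ?_
  rw [eInf_apply]
  split_ifs <;> norm_num

lemma sum_smul_eInf_apply {m k : ℕ} (w : Fin k → ℝ) (g : Fin k → Fin m) (j : Fin m) :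
    (∑ l, w l • eInf m (g l)) j = ∑ l, w l * (if j = g l then 1 else 0) := by
  have h1 : (∑ l, w l • eInf m (g l)) j = ∑ l, (w l • eInf m (g l)) j :=
    by rw [WithLp.ofLp_sum, Finset.sum_apply]
  rw [h1]
  refine Finset.sum_congr rfl fun l _ => ?_
  rw [PiLp.smul_apply, smul_eq_mul, eInf_apply]

noncomputable def Jlin {m : ℕ} (k : ℕ) (ι : Fin k → Fin m) : ellInf k →ₗ[ℝ] ellInf m where
  toFun y := ∑ l, y l • eInf m (ι l)
  map_add' y z := by
    rw [← Finset.sum_add_distrib]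
    exact Finset.sum_congr rfl fun l _ => by rw [PiLp.add_apply, add_smul]
  map_smul' c y := by
    show ∑ l, (c • y) l • eInf m (ι l) = c • ∑ l, y l • eInf m (ι l)
    rw [Finset.smul_sum]
    exact Finset.sum_congr rfl fun l _ => by rw [PiLp.smul_apply, smul_eq_mul, mul_smul]

set_option maxHeartbeats 1000000 in
lemma key {X : Type*} [NormedAddCommGroup X] [NormedSpace ℝ X]
    {m : ℕ} (V : ellInf m →L[ℝ] X) {δ : ℝ} (hδ : 0 < δ)
    (f : Fin m → X →L[ℝ] ℝ) (hf : ∀ i, ‖f i‖ ≤ 1)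
    (σ : Finset (Fin m)) (hσ : σ.Nonempty)
    (hdiag : ∀ i ∈ σ, δ ≤ f i (V (eInf m i)))
    (hrow : ∀ i ∈ σ, ∑ j ∈ σ.erase i, |f i (V (eInf m j))| ≤ δ / 2) :
    gammaFac V (ContinuousLinearMap.id ℝ (ellInf σ.card)) ≤ ENNReal.ofReal (2 * δ⁻¹) := by
  classical
  have hk : 0 < σ.card := Finset.card_pos.mpr hσ
  set ι : Fin σ.card → Fin m := fun l => ((σ.orderIsoOfFin rfl) l : Fin m) with hι
  have hιinj : Function.Injective ι := fun l1 l2 h =>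
    (σ.orderIsoOfFin rfl).injective (Subtype.ext h)
  have hιmem : ∀ l, ι l ∈ σ := fun l => ((σ.orderIsoOfFin rfl) l).2
  have hιsurj : ∀ j ∈ σ, ∃ l, ι l = j := fun j hj =>
    ⟨(σ.orderIsoOfFin rfl).symm ⟨j, hj⟩,
      congrArg Subtype.val ((σ.orderIsoOfFin rfl).apply_symm_apply ⟨j, hj⟩)⟩
  set J : ellInf σ.card →L[ℝ] ellInf m := LinearMap.toContinuousLinearMap (Jlin σ.card ι)
    with hJ
  have hJapp : ∀ y : ellInf σ.card, J y = ∑ l, y l • eInf m (ι l) := fun y => rfl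
  have hJnorm : ‖J‖ ≤ 1 := by
    refine ContinuousLinearMap.opNorm_le_bound _ zero_le_one fun y => ?_
    rw [one_mul]
    refine ellInf_norm_le _ (norm_nonneg y) fun j => ?_
    have happ : (J y) j = ∑ l, y l * (if j = ι l then 1 else 0) := by
      rw [hJapp]; exact sum_smul_eInf_apply y ι j
    rw [happ]
    calc |∑ l, y l * (if j = ι l then 1 else 0)|
        ≤ ∑ l, |y l * (if j = ι l then 1 else 0)| := Finset.abs_sum_le_sum_abs _ _
      _ ≤ ∑ l, (if j = ι l then ‖y‖ else 0) := by
          refine Finset.sum_le_sum fun l _ => ?_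
          split_ifs with h
          · rw [mul_one]; exact ellInf_abs_le_norm y l
          · simp
      _ = (univ.filter (fun l => j = ι l)).card • ‖y‖ := by
          rw [← Finset.sum_filter, Finset.sum_const]
      _ ≤ ‖y‖ := by
          have hle : (univ.filter (fun l => j = ι l)).card ≤ 1 :=
            Finset.card_le_one.mpr fun l1 h1 l2 h2 =>
              hιinj (((Finset.mem_filter.mp h1).2).symm.trans (Finset.mem_filter.mp h2).2)
          rw [nsmul_eq_mul]
          calc ((univ.filter (fun l => j = ι l)).card : ℝ) * ‖y‖
              ≤ 1 * ‖y‖ := by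
                apply mul_le_mul_of_nonneg_right _ (norm_nonneg y)
                exact_mod_cast hle
            _ = ‖y‖ := one_mul _
  -- the operator u
  set ulin : X →ₗ[ℝ] ellInf σ.card :=
    (WithLp.linearEquiv ⊤ ℝ (Fin σ.card → ℝ)).symm.toLinearMap.comp
      (LinearMap.pi (fun l => (f (ι l)).toLinearMap)) with hulin
  have hubound : ∀ x : X, ‖ulin x‖ ≤ 1 * ‖x‖ := by
    intro x
    rw [one_mul]
    refine ellInf_norm_le _ (norm_nonneg x) fun l => ?_
    have : ulin x l = f (ι l) x := rfl
    rw [this, ← Real.norm_eq_abs]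
    calc ‖f (ι l) x‖ ≤ ‖f (ι l)‖ * ‖x‖ := (f (ι l)).le_opNorm x
      _ ≤ 1 * ‖x‖ := mul_le_mul_of_nonneg_right (hf _) (norm_nonneg x)
      _ = ‖x‖ := one_mul _
  set u : X →L[ℝ] ellInf σ.card := LinearMap.mkContinuous ulin 1 hubound with hu
  set M : ellInf σ.card →L[ℝ] ellInf σ.card := u.comp (V.comp J) with hM
  have hMapp : ∀ (y : ellInf σ.card) (l : Fin σ.card),
      M y l = ∑ l', f (ι l) (V (eInf m (ι l'))) * y l' := by
    intro y l
    have h1 : M y l = f (ι l) (V (J y)) := rfl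
    have h2 : V (J y) = ∑ l', y l' • V (eInf m (ι l')) := by
      rw [hJapp, map_sum]
      exact Finset.sum_congr rfl fun l' _ => (V.map_smul _ _)
    rw [h1, h2, map_sum]
    exact Finset.sum_congr rfl fun l' _ => by
      rw [(f (ι l)).map_smul, smul_eq_mul, mul_comm]
  have hMlow : ∀ y : ellInf σ.card, δ / 2 * ‖y‖ ≤ ‖M y‖ := by
    intro y
    have hne : (univ : Finset (Fin σ.card)).Nonempty := by
      rw [Finset.univ_nonempty_iff]
      exact Fin.pos_iff_nonempty.mp hk
    obtain ⟨l₀, -, hmax⟩ := Finset.exists_max_image univ (fun l => |y l|) hne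
    have hynorm : ‖y‖ = |y l₀| :=
      le_antisymm (ellInf_norm_le _ (abs_nonneg _) fun l => hmax l (Finset.mem_univ l))
        (ellInf_abs_le_norm y l₀)
    set i : Fin m := ι l₀ with hidef
    have hisym : i ∈ σ := hιmem l₀
    have hsplit : M y l₀ = f i (V (eInf m i)) * y l₀
        + ∑ l' ∈ univ.erase l₀, f i (V (eInf m (ι l'))) * y l' := by
      rw [hMapp]
      exact (Finset.add_sum_erase _ _ (Finset.mem_univ l₀)).symm
    have himg : Finset.image ι (univ.erase l₀) = σ.erase i := by
      ext j
      constructor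
      · intro hjmem
        obtain ⟨l', hl', rfl⟩ := Finset.mem_image.mp hjmem
        have hl'ne : l' ≠ l₀ := Finset.ne_of_mem_erase hl'
        refine Finset.mem_erase.mpr ⟨?_, hιmem l'⟩
        intro h
        exact hl'ne (hιinj (h.trans hidef))
      · intro hjmem
        obtain ⟨hji, hjσ⟩ := Finset.mem_erase.mp hjmem
        obtain ⟨l', rfl⟩ := hιsurj _ hjσ
        refine Finset.mem_image.mpr ⟨l', Finset.mem_erase.mpr ⟨?_, Finset.mem_univ _⟩, rfl⟩
        exact fun h => hji (by rw [h])
    have hrest : |∑ l' ∈ univ.erase l₀, f i (V (eInf m (ι l'))) * y l'| ≤ δ / 2 * |y l₀| := by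
      calc |∑ l' ∈ univ.erase l₀, f i (V (eInf m (ι l'))) * y l'|
          ≤ ∑ l' ∈ univ.erase l₀, |f i (V (eInf m (ι l'))) * y l'| :=
            Finset.abs_sum_le_sum_abs _ _
        _ ≤ ∑ l' ∈ univ.erase l₀, |f i (V (eInf m (ι l')))| * |y l₀| := by
            refine Finset.sum_le_sum fun l' _ => ?_
            rw [abs_mul]
            exact mul_le_mul_of_nonneg_left (hmax l' (Finset.mem_univ l')) (abs_nonneg _)
        _ = (∑ l' ∈ univ.erase l₀, |f i (V (eInf m (ι l')))|) * |y l₀| :=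
            (Finset.sum_mul _ _ _).symm
        _ ≤ δ / 2 * |y l₀| := by
            refine mul_le_mul_of_nonneg_right ?_ (abs_nonneg _)
            have hsum : ∑ l' ∈ univ.erase l₀, |f i (V (eInf m (ι l')))|
                = ∑ j ∈ σ.erase i, |f i (V (eInf m j))| := by
              rw [← himg, Finset.sum_image]
              intro l1 _ l2 _ h
              exact hιinj h
            rw [hsum]
            exact hrow i hisym
    have hdiag' : δ * |y l₀| ≤ |f i (V (eInf m i)) * y l₀| := by
      rw [abs_mul]
      refine mul_le_mul_of_nonneg_right ?_ (abs_nonneg _)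
      have := hdiag i hisym
      rw [abs_of_nonneg (le_trans (le_of_lt hδ) this)]
      exact this
    have habs : |f i (V (eInf m i)) * y l₀| - |∑ l' ∈ univ.erase l₀,
        f i (V (eInf m (ι l'))) * y l'| ≤ |M y l₀| := by
      have := abs_add_le (M y l₀) (-(∑ l' ∈ univ.erase l₀, f i (V (eInf m (ι l'))) * y l'))
      rw [abs_neg] at this
      have heq : M y l₀ + -(∑ l' ∈ univ.erase l₀, f i (V (eInf m (ι l'))) * y l')
          = f i (V (eInf m i)) * y l₀ := by rw [hsplit]; ring
      rw [heq] at this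
      linarith
    have := ellInf_abs_le_norm (M y) l₀
    rw [hynorm]
    linarith
  -- M is bijective
  have hMinj : Function.Injective M := by
    intro y z hyz
    have h0 : M (y - z) = 0 := by rw [map_sub, hyz, sub_self]
    have := hMlow (y - z)
    rw [h0, norm_zero] at this
    have hnn : 0 ≤ ‖y - z‖ := norm_nonneg _
    have : ‖y - z‖ = 0 := by nlinarith
    exact sub_eq_zero.mp (norm_eq_zero.mp this)
  have hMsurj : Function.Surjective M :=
    (LinearMap.injective_iff_surjective (f := (M : ellInf σ.card →ₗ[ℝ] ellInf σ.card))).mp hMinj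
  set Elin : ellInf σ.card ≃ₗ[ℝ] ellInf σ.card :=
    LinearEquiv.ofBijective (M : ellInf σ.card →ₗ[ℝ] ellInf σ.card) ⟨hMinj, hMsurj⟩ with hElin
  set E : ellInf σ.card ≃L[ℝ] ellInf σ.card := Elin.toContinuousLinearEquiv with hE
  have hEapp : ∀ y, E y = M y := fun y => rfl
  set B : X →L[ℝ] ellInf σ.card :=
    (E.symm : ellInf σ.card →L[ℝ] ellInf σ.card).comp u with hB
  have hcomp : B.comp (V.comp J) = ContinuousLinearMap.id ℝ (ellInf σ.card) := by
    refine ContinuousLinearMap.ext fun y => ?_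
    show E.symm (u (V (J y))) = y
    have : u (V (J y)) = E y := (hEapp y).symm
    rw [this]
    exact E.symm_apply_apply y
  have hBnorm : ‖B‖ ≤ 2 * δ⁻¹ := by
    have hδinv : 0 ≤ 2 * δ⁻¹ := by positivity
    refine ContinuousLinearMap.opNorm_le_bound _ hδinv fun x => ?_
    have h1 : B x = E.symm (u x) := rfl
    have h2 : δ / 2 * ‖E.symm (u x)‖ ≤ ‖u x‖ := by
      have := hMlow (E.symm (u x))
      have hz : M (E.symm (u x)) = u x := by
        rw [← hEapp]
        exact E.apply_symm_apply (u x)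
      rw [hz] at this
      exact this
    have h3 : ‖u x‖ ≤ ‖x‖ := by
      have := hubound x
      rw [one_mul] at this
      exact this
    rw [h1]
    have hδ1 : δ * δ⁻¹ = 1 := mul_inv_cancel₀ (ne_of_gt hδ)
    nlinarith [norm_nonneg (E.symm (u x)), norm_nonneg x, norm_nonneg (u x),
      inv_pos.mpr hδ]
  -- conclude
  have hmem : ENNReal.ofReal (‖J‖ * ‖B‖) ∈ {c : ℝ≥0∞ |
      ∃ (A : ellInf σ.card →L[ℝ] ellInf m) (B' : X →L[ℝ] ellInf σ.card),
        B'.comp (V.comp A) = ContinuousLinearMap.id ℝ (ellInf σ.card) ∧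
        c = ENNReal.ofReal (‖A‖ * ‖B'‖)} := ⟨J, B, hcomp, rfl⟩
  refine le_trans (sInf_le hmem) (ENNReal.ofReal_le_ofReal ?_)
  calc ‖J‖ * ‖B‖ ≤ 1 * ‖B‖ := mul_le_mul_of_nonneg_right hJnorm (norm_nonneg B)
    _ = ‖B‖ := one_mul _
    _ ≤ 2 * δ⁻¹ := hBnorm


lemma weight_base (p q : ℝ) {α : Type*} [DecidableEq α] (s : Finset α) :
    ∑ σ ∈ s.powerset, p ^ σ.card * q ^ (s.card - σ.card) = (p + q) ^ s.card := by
  rw [← Finset.prod_const, Finset.prod_add]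
  refine Finset.sum_congr rfl fun t ht => ?_
  rw [Finset.prod_const, Finset.prod_const, Finset.card_sdiff_of_subset (Finset.mem_powerset.mp ht)]

lemma weight_subset (p q : ℝ) {α : Type*} [DecidableEq α] (s τ : Finset α) (hτ : τ ⊆ s) :
    ∑ σ ∈ s.powerset.filter (fun σ => τ ⊆ σ), p ^ σ.card * q ^ (s.card - σ.card)
      = p ^ τ.card * (p + q) ^ (s.card - τ.card) := by
  have hb := weight_base p q (s \ τ)
  rw [Finset.card_sdiff_of_subset hτ] at hb
  rw [← hb, Finset.mul_sum]
  refine Finset.sum_nbij' (fun σ => σ \ τ) (fun σ' => σ' ∪ τ) ?_ ?_ ?_ ?_ ?_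
  · intro σ hσ
    simp only [Finset.mem_filter, Finset.mem_powerset] at hσ ⊢
    exact Finset.sdiff_subset_sdiff hσ.1 (le_refl _)
  · intro σ' hσ'
    simp only [Finset.mem_filter, Finset.mem_powerset] at hσ' ⊢
    constructor
    · exact Finset.union_subset (hσ'.trans (Finset.sdiff_subset)) hτ
    · exact Finset.subset_union_right
  · intro σ hσ
    simp only [Finset.mem_filter, Finset.mem_powerset] at hσ
    show σ \ τ ∪ τ = σ
    exact Finset.sdiff_union_of_subset hσ.2
  · intro σ' hσ'
    simp only [Finset.mem_powerset] at hσ'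
    have : Disjoint σ' τ := Finset.disjoint_of_subset_left hσ' Finset.sdiff_disjoint
    show (σ' ∪ τ) \ τ = σ'
    rw [Finset.union_sdiff_cancel_right this]
  · intro σ hσ
    simp only [Finset.mem_filter, Finset.mem_powerset] at hσ
    have h1 : (σ \ τ).card = σ.card - τ.card := Finset.card_sdiff_of_subset hσ.2
    have h2 : τ.card ≤ σ.card := Finset.card_le_card hσ.2
    have h3 : σ.card ≤ s.card := Finset.card_le_card hσ.1
    rw [h1, ← mul_assoc, ← pow_add]
    congr 2
    · omega
    · omega

lemma marginal_one (p q : ℝ) (hpq : p + q = 1) {α : Type*} [DecidableEq α] [Fintype α]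
    (i : α) :
    ∑ σ ∈ Finset.univ.powerset.filter (fun σ : Finset α => i ∈ σ),
      p ^ σ.card * q ^ (Fintype.card α - σ.card) = p := by
  have h := weight_subset p q Finset.univ {i} (Finset.subset_univ _)
  rw [hpq, one_pow, Finset.card_singleton, pow_one, mul_one] at h
  rw [← Finset.card_univ]
  have hset : Finset.univ.powerset.filter (fun σ : Finset α => i ∈ σ)
      = Finset.univ.powerset.filter (fun σ => {i} ⊆ σ) := by
    ext σ; simp [Finset.singleton_subset_iff]
  rw [hset]; exact h

lemma marginal_two (p q : ℝ) (hpq : p + q = 1) {α : Type*} [DecidableEq α] [Fintype α]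
    {i j : α} (hij : i ≠ j) :
    ∑ σ ∈ Finset.univ.powerset.filter (fun σ : Finset α => i ∈ σ ∧ j ∈ σ),
      p ^ σ.card * q ^ (Fintype.card α - σ.card) = p ^ 2 := by
  have h := weight_subset p q Finset.univ {i, j} (Finset.subset_univ _)
  have hc : ({i, j} : Finset α).card = 2 := Finset.card_pair hij
  rw [hpq, one_pow, hc, mul_one] at h
  rw [← Finset.card_univ]
  have hset : Finset.univ.powerset.filter (fun σ : Finset α => i ∈ σ ∧ j ∈ σ)
      = Finset.univ.powerset.filter (fun σ => {i, j} ⊆ σ) := by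
    ext σ; simp [Finset.insert_subset_iff, Finset.singleton_subset_iff]
  rw [hset]; exact h

lemma combo {m : ℕ} {δ : ℝ} (hδ0 : 0 < δ) (hδ4 : δ < 4) (a : Fin m → Fin m → ℝ)
    (hrow : ∀ i, ∑ j ∈ Finset.univ.erase i, |a i j| ≤ 1) :
    ∃ σ : Finset (Fin m), δ * m / 8 ≤ (σ.card : ℝ) ∧
      ∀ i ∈ σ, ∑ j ∈ σ.erase i, |a i j| ≤ δ / 2 := by
  classical
  set p : ℝ := δ / 4 with hp
  set q : ℝ := 1 - p with hq
  have hpq : p + q = 1 := by rw [hq]; ring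
  have hp0 : 0 < p := by rw [hp]; linarith
  have hq0 : 0 < q := by rw [hq, hp]; linarith
  set w : Finset (Fin m) → ℝ := fun σ => p ^ σ.card * q ^ (m - σ.card) with hw
  set Pen : Finset (Fin m) → ℝ := fun σ => ∑ i ∈ σ, ∑ j ∈ σ.erase i, |a i j| with hPendef
  set S : ℝ := ∑ i : Fin m, ∑ j ∈ Finset.univ.erase i, |a i j| with hS
  -- total weight is 1
  have hW1 : ∑ σ ∈ Finset.univ.powerset, w σ = 1 := by
    have := weight_base p q (Finset.univ : Finset (Fin m))
    rw [hpq, one_pow] at this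
    simpa [hw, Finset.card_univ, Fintype.card_fin] using this
  -- first moment
  have hA : ∑ σ ∈ Finset.univ.powerset, w σ * (σ.card : ℝ) = p * m := by
    have hterm : ∀ σ ∈ (Finset.univ : Finset (Fin m)).powerset,
        w σ * (σ.card : ℝ) = ∑ i : Fin m, (if i ∈ σ then w σ else 0) := by
      intro σ _
      rw [Finset.sum_ite_mem, Finset.univ_inter, Finset.sum_const, nsmul_eq_mul, mul_comm]
    rw [Finset.sum_congr rfl hterm, Finset.sum_comm]
    have hmarg : ∀ i : Fin m,
        ∑ σ ∈ Finset.univ.powerset, (if i ∈ σ then w σ else 0) = p := by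
      intro i
      rw [← Finset.sum_filter]
      have := marginal_one p q hpq i
      simpa [hw, Fintype.card_fin] using this
    rw [Finset.sum_congr rfl (fun i _ => hmarg i), Finset.sum_const, Finset.card_univ,
      Fintype.card_fin, nsmul_eq_mul, mul_comm]
  -- second moment
  have hPen : ∀ σ : Finset (Fin m), w σ * Pen σ
      = ∑ i : Fin m, ∑ j ∈ Finset.univ.erase i,
          (if i ∈ σ ∧ j ∈ σ then w σ * |a i j| else 0) := by
    intro σ
    have h1 : ∀ i, ∑ j ∈ σ.erase i, |a i j|
        = ∑ j ∈ Finset.univ.erase i, (if j ∈ σ then |a i j| else 0) := by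
      intro i
      rw [← Finset.sum_filter]
      apply Finset.sum_congr _ (fun j _ => rfl)
      ext j
      simp only [Finset.mem_filter, Finset.mem_erase, Finset.mem_univ, true_and]
      tauto
    have h2 : Pen σ = ∑ i : Fin m, (if i ∈ σ then
        ∑ j ∈ Finset.univ.erase i, (if j ∈ σ then |a i j| else 0) else 0) := by
      rw [hPendef]
      rw [← Finset.sum_filter, Finset.filter_univ_mem]
      exact Finset.sum_congr rfl fun i _ => h1 i
    rw [h2, Finset.mul_sum]
    refine Finset.sum_congr rfl fun i _ => ?_
    rw [mul_ite, mul_zero, Finset.mul_sum]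
    split_ifs with hi
    · refine Finset.sum_congr rfl fun j _ => ?_
      rw [mul_ite, mul_zero]
      simp [hi]
    · symm
      refine Finset.sum_eq_zero fun j _ => ?_
      simp [hi]
  have hB : ∑ σ ∈ Finset.univ.powerset, w σ * Pen σ = p ^ 2 * S := by
    calc ∑ σ ∈ Finset.univ.powerset, w σ * Pen σ
        = ∑ σ ∈ Finset.univ.powerset, ∑ i : Fin m, ∑ j ∈ Finset.univ.erase i,
            (if i ∈ σ ∧ j ∈ σ then w σ * |a i j| else 0) :=
          Finset.sum_congr rfl (fun σ _ => hPen σ)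
      _ = ∑ i : Fin m, ∑ σ ∈ Finset.univ.powerset, ∑ j ∈ Finset.univ.erase i,
            (if i ∈ σ ∧ j ∈ σ then w σ * |a i j| else 0) := Finset.sum_comm
      _ = ∑ i : Fin m, ∑ j ∈ Finset.univ.erase i, ∑ σ ∈ Finset.univ.powerset,
            (if i ∈ σ ∧ j ∈ σ then w σ * |a i j| else 0) :=
          Finset.sum_congr rfl (fun i _ => Finset.sum_comm)
      _ = ∑ i : Fin m, ∑ j ∈ Finset.univ.erase i, |a i j| * p ^ 2 := by
          refine Finset.sum_congr rfl fun i _ => Finset.sum_congr rfl fun j hj => ?_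
          have hij : i ≠ j := ((Finset.mem_erase.mp hj).1).symm
          rw [← Finset.sum_filter, ← Finset.sum_mul]
          have := marginal_two p q hpq hij
          rw [Fintype.card_fin] at this
          rw [show ∑ σ ∈ Finset.univ.powerset.filter
              (fun σ : Finset (Fin m) => i ∈ σ ∧ j ∈ σ), w σ = p ^ 2 from this, mul_comm]
      _ = p ^ 2 * S := by
          rw [hS, Finset.mul_sum]
          refine Finset.sum_congr rfl fun i _ => ?_
          rw [Finset.mul_sum]
          exact Finset.sum_congr rfl fun j _ => mul_comm _ _
  have hSm : S ≤ m := by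
    rw [hS]
    calc ∑ i : Fin m, ∑ j ∈ Finset.univ.erase i, |a i j| ≤ ∑ _i : Fin m, (1:ℝ) :=
          Finset.sum_le_sum fun i _ => hrow i
      _ = m := by simp
  have hS0 : 0 ≤ S := Finset.sum_nonneg fun i _ => Finset.sum_nonneg fun j _ => abs_nonneg _
  -- expectation bound
  have hmain : δ * m / 8 ≤ ∑ σ ∈ Finset.univ.powerset,
      w σ * ((σ.card : ℝ) - (2 / δ) * Pen σ) := by
    have expand : ∑ σ ∈ Finset.univ.powerset, w σ * ((σ.card : ℝ) - (2 / δ) * Pen σ)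
        = (∑ σ ∈ Finset.univ.powerset, w σ * (σ.card : ℝ))
          - (2 / δ) * ∑ σ ∈ Finset.univ.powerset, w σ * Pen σ := by
      rw [Finset.mul_sum, ← Finset.sum_sub_distrib]
      exact Finset.sum_congr rfl fun σ _ => by ring
    rw [expand, hA, hB]
    have hpm : p * m = δ * m / 4 := by rw [hp]; ring
    have hkey : (2 / δ) * (p ^ 2 * S) ≤ δ * m / 8 := by
      have h1 : (2 / δ) * (p ^ 2 * S) = (δ / 8) * S := by
        rw [hp]; field_simp; ring
      rw [h1]
      nlinarith
    linarith
  -- pick a good σ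
  have hne : (Finset.univ.powerset : Finset (Finset (Fin m))).Nonempty :=
    ⟨∅, Finset.empty_mem_powerset _⟩
  have hsum_le : ∑ σ ∈ Finset.univ.powerset, w σ * (δ * m / 8)
      ≤ ∑ σ ∈ Finset.univ.powerset, w σ * ((σ.card : ℝ) - (2 / δ) * Pen σ) := by
    rw [← Finset.sum_mul, hW1, one_mul]
    exact hmain
  obtain ⟨σ, hσmem, hσ⟩ := Finset.exists_le_of_sum_le hne hsum_le
  have hwpos : 0 < w σ := by
    rw [hw]
    exact mul_pos (pow_pos hp0 _) (pow_pos hq0 _)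
  have hg : δ * m / 8 ≤ (σ.card : ℝ) - (2 / δ) * Pen σ :=
    le_of_mul_le_mul_left hσ hwpos
  -- cleanup
  refine ⟨σ.filter (fun i => ∑ j ∈ σ.erase i, |a i j| ≤ δ / 2), ?_, ?_⟩
  · set Bad := σ.filter (fun i => ¬ (∑ j ∈ σ.erase i, |a i j| ≤ δ / 2)) with hBad
    have hsplit := Finset.card_filter_add_card_filter_not
      (s := σ) (p := fun i => ∑ j ∈ σ.erase i, |a i j| ≤ δ / 2)
    have hPenBad : (Bad.card : ℝ) * (δ / 2) ≤ Pen σ := by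
      calc (Bad.card : ℝ) * (δ / 2) = ∑ _i ∈ Bad, (δ / 2) := by
            rw [Finset.sum_const, nsmul_eq_mul]
        _ ≤ ∑ i ∈ Bad, ∑ j ∈ σ.erase i, |a i j| := by
            refine Finset.sum_le_sum fun i hi => ?_
            have := (Finset.mem_filter.mp hi).2
            linarith [lt_of_not_ge this]
        _ ≤ Pen σ := by
            rw [hPendef]
            exact Finset.sum_le_sum_of_subset_of_nonneg (Finset.filter_subset _ _)
              (fun i _ _ => Finset.sum_nonneg fun j _ => abs_nonneg _)
    have hBadcard : (Bad.card : ℝ) ≤ (2 / δ) * Pen σ := by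
      have h2δ : (0:ℝ) < δ / 2 := by linarith
      have := (le_div_iff₀ h2δ).mpr hPenBad
      have heq : Pen σ / (δ / 2) = 2 / δ * Pen σ := by
        field_simp
      linarith [heq ▸ this]
    have hcards : ((σ.filter (fun i => ∑ j ∈ σ.erase i, |a i j| ≤ δ / 2)).card : ℝ)
        = (σ.card : ℝ) - (Bad.card : ℝ) := by
      rw [hBad]
      push_cast [← hsplit]
      ring
    rw [hcards]
    linarith
  · intro i hi
    have hi' := Finset.mem_filter.mp hi
    calc ∑ j ∈ (σ.filter (fun i => ∑ j ∈ σ.erase i, |a i j| ≤ δ / 2)).erase i, |a i j|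
        ≤ ∑ j ∈ σ.erase i, |a i j| :=
          Finset.sum_le_sum_of_subset_of_nonneg
            (Finset.erase_subset_erase _ (Finset.filter_subset _ _))
            (fun j _ _ => abs_nonneg _)
      _ ≤ δ / 2 := hi'.2

end AuxProof

theorem statement2
    {X : Type*} [NormedAddCommGroup X] [NormedSpace ℝ X] [CompleteSpace X]
    (m : ℕ) (V : ellInf m →L[ℝ] X) (δ : ℝ) (hδ : 0 < δ)
    (hV : ‖V‖ = 1)
    (he : ∀ i : Fin m, ‖V ((WithLp.equiv ⊤ (Fin m → ℝ)).symm (Pi.single i 1))‖ ≥ δ) :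
    ∃ k : ℕ, (k : ℝ) ≥ (1 / 8) * δ * m ∧
      gammaFac V (ContinuousLinearMap.id ℝ (ellInf k)) ≤ ENNReal.ofReal (2 * δ⁻¹) := by
  classical
  rcases Nat.eq_zero_or_pos m with hm | hm
  · subst hm
    refine ⟨0, by norm_num, ?_⟩
    have hsub : ∀ a b : ellInf 0, a = b := by
      intro a b
      apply (WithLp.equiv ⊤ (Fin 0 → ℝ)).injective
      funext i
      exact Fin.elim0 i
    have hcomp : (0 : X →L[ℝ] ellInf 0).comp (V.comp (0 : ellInf 0 →L[ℝ] ellInf 0))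
        = ContinuousLinearMap.id ℝ (ellInf 0) :=
      ContinuousLinearMap.ext fun y => hsub _ _
    have hmem : ENNReal.ofReal (‖(0 : ellInf 0 →L[ℝ] ellInf 0)‖ * ‖(0 : X →L[ℝ] ellInf 0)‖)
        ∈ {c : ℝ≥0∞ | ∃ (A : ellInf 0 →L[ℝ] ellInf 0) (B' : X →L[ℝ] ellInf 0),
          B'.comp (V.comp A) = ContinuousLinearMap.id ℝ (ellInf 0) ∧
          c = ENNReal.ofReal (‖A‖ * ‖B'‖)} := ⟨0, 0, hcomp, rfl⟩
    refine le_trans (sInf_le hmem) (ENNReal.ofReal_le_ofReal ?_)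
    rw [norm_zero, norm_zero, mul_zero]
    positivity
  · have hVe : ∀ i, δ ≤ ‖V (eInf m i)‖ := fun i => he i
    have hδ1 : δ ≤ 1 := by
      refine le_trans (hVe ⟨0, hm⟩) ?_
      calc ‖V (eInf m ⟨0, hm⟩)‖ ≤ ‖V‖ * ‖eInf m ⟨0, hm⟩‖ := V.le_opNorm _
        _ ≤ 1 * 1 := by
            rw [hV]
            exact mul_le_mul_of_nonneg_left (eInf_norm_le _) zero_le_one
        _ = 1 := one_mul 1
    have hne0 : ∀ i, V (eInf m i) ≠ 0 := by
      intro i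
      have : 0 < ‖V (eInf m i)‖ := lt_of_lt_of_le hδ (hVe i)
      exact norm_pos_iff.mp this
    choose f hf1 hf2 using fun i => exists_dual_vector ℝ (V (eInf m i)) (norm_ne_zero_iff.mpr (hne0 i))
    have hf : ∀ i, ‖f i‖ ≤ 1 := fun i => le_of_eq (hf1 i)
    have hf2' : ∀ i, f i (V (eInf m i)) = ‖V (eInf m i)‖ := by
      intro i
      simpa using hf2 i
    have hdiagAll : ∀ i, δ ≤ f i (V (eInf m i)) := fun i => (hf2' i) ▸ hVe i
    -- row sums bounded by 1
    have hrowAll : ∀ i, ∑ j, |f i (V (eInf m j))| ≤ 1 := by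
      intro i
      set s : Fin m → ℝ := fun j => if 0 ≤ f i (V (eInf m j)) then (1:ℝ) else -1 with hs
      set z : ellInf m := ∑ j, s j • eInf m j with hz
      have hzapp : ∀ j, z j = s j := by
        intro j
        rw [hz, sum_smul_eInf_apply]
        have : ∀ l, s l * (if j = l then (1:ℝ) else 0) = if j = l then s l else 0 := by
          intro l
          rw [mul_ite, mul_one, mul_zero]
        rw [Finset.sum_congr rfl fun l _ => this l, Finset.sum_ite_eq]
        simp
      have hznorm : ‖z‖ ≤ 1 := by
        refine ellInf_norm_le _ zero_le_one fun j => ?_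
        rw [hzapp]
        simp only [hs]
        split_ifs <;> norm_num
      have hfVz : f i (V z) = ∑ j, |f i (V (eInf m j))| := by
        have h1 : V z = ∑ j, s j • V (eInf m j) := by
          rw [hz, map_sum]
          exact Finset.sum_congr rfl fun j _ => V.map_smul _ _
        rw [h1, map_sum]
        refine Finset.sum_congr rfl fun j _ => ?_
        rw [(f i).map_smul, smul_eq_mul]
        simp only [hs]
        split_ifs with h
        · rw [one_mul, abs_of_nonneg h]
        · rw [neg_one_mul, abs_of_neg (lt_of_not_ge h)]
      calc ∑ j, |f i (V (eInf m j))| = f i (V z) := hfVz.symm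
        _ ≤ |f i (V z)| := le_abs_self _
        _ = ‖f i (V z)‖ := (Real.norm_eq_abs _).symm
        _ ≤ ‖f i‖ * ‖V z‖ := (f i).le_opNorm _
        _ ≤ 1 * ‖V z‖ := mul_le_mul_of_nonneg_right (hf i) (norm_nonneg _)
        _ = ‖V z‖ := one_mul _
        _ ≤ ‖V‖ * ‖z‖ := V.le_opNorm _
        _ ≤ 1 := by rw [hV, one_mul]; exact hznorm
    have hrowAll' : ∀ i, ∑ j ∈ Finset.univ.erase i, |f i (V (eInf m j))| ≤ 1 := by
      intro i
      refine le_trans ?_ (hrowAll i)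
      exact Finset.sum_le_sum_of_subset_of_nonneg (Finset.erase_subset _ _)
        (fun j _ _ => abs_nonneg _)
    by_cases hbig : δ * m ≤ 8
    · -- small case : singleton
      set σ : Finset (Fin m) := {⟨0, hm⟩} with hσdef
      have hσne : σ.Nonempty := ⟨_, Finset.mem_singleton_self _⟩
      have hrowσ : ∀ i ∈ σ, ∑ j ∈ σ.erase i, |f i (V (eInf m j))| ≤ δ / 2 := by
        intro i hi
        rw [hσdef] at hi
        rw [Finset.mem_singleton.mp hi, hσdef, Finset.erase_singleton, Finset.sum_empty]
        positivity
      refine ⟨σ.card, ?_, key V hδ f hf σ hσne (fun i _ => hdiagAll i) hrowσ⟩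
      rw [hσdef, Finset.card_singleton]
      push_cast
      linarith
    · push_neg at hbig
      obtain ⟨σ, hσcard, hσrow⟩ := combo hδ (lt_of_le_of_lt hδ1 (by norm_num))
        (fun i j => f i (V (eInf m j))) hrowAll'
      have hσne : σ.Nonempty := by
        rw [← Finset.card_pos]
        have : (0:ℝ) < (σ.card : ℝ) := by nlinarith
        exact_mod_cast this
      refine ⟨σ.card, ?_, key V hδ f hf σ hσne (fun i _ => hdiagAll i) hσrow⟩
      linarith
end

section
/- Let Z and W be Banach spaces, let T : Z → W be a bounded linear operator, let Z_0 be a subspace of Z with dim T(Z_0) = n < ∞, and let α be a norm on the space F(Z,W) of finite rank bounded operators from Z to W such that α(u) ≤ ‖u‖ whenever rank u = 1. If 1 ≤ β < ∞ and q_W(n,β) < ∞, then there exists a finite rank operator P : W → W with ‖P‖ ≤ β, rank P ≤ q_W(n,β), and α(P∘T) ≥ inf{ α(u) : u ∈ F(Z,W), u|_{Z_0} = T|_{Z_0} }. -/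
open MeasureTheory ENNReal

section Aux9

/-- Algebraic Hahn–Banach with a prescribed vanishing subspace. -/
theorem auxHB9 {X : Type*} [AddCommGroup X] [Module ℝ X]
    (N : X → ℝ) (A : Submodule ℝ X) (u₀ : X) (d : ℝ)
    (hN_add : ∀ x y, N (x + y) ≤ N x + N y)
    (hN_smul : ∀ c : ℝ, 0 < c → ∀ x, N (c • x) = c * N x)
    (hN_nonneg : ∀ x, 0 ≤ N x)
    (hd0 : 0 ≤ d)
    (hkey : ∀ a ∈ A, d ≤ N (u₀ + a)) :
    ∃ φ : X →ₗ[ℝ] ℝ, (∀ x, φ x ≤ N x) ∧ (∀ a ∈ A, φ a = 0) ∧ φ u₀ = d := by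
  have hN0 : N 0 = 0 := by
    have h2 := hN_smul 2 two_pos 0
    rw [smul_zero] at h2
    linarith
  by_cases hu : u₀ ∈ A
  · have hd' : d = 0 := by
      have := hkey (-u₀) (neg_mem hu)
      rw [add_neg_cancel, hN0] at this
      linarith
    exact ⟨0, fun x => by simpa using hN_nonneg x, fun a _ => rfl, by simp [hd']⟩
  · have hm : (A.mkQ u₀ : X ⧸ A) ≠ 0 := by
      simpa [Submodule.Quotient.mk_eq_zero] using hu
    obtain ⟨p', hc⟩ := Submodule.exists_isCompl (ℝ ∙ (A.mkQ u₀))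
    set η : (ℝ ∙ (A.mkQ u₀)) →ₗ[ℝ] ℝ :=
      (LinearEquiv.coord ℝ (X ⧸ A) (A.mkQ u₀) hm : (ℝ ∙ (A.mkQ u₀)) →ₗ[ℝ] ℝ) with hη
    set ξ : X →ₗ[ℝ] ℝ := (LinearMap.ofIsCompl hc η 0).comp A.mkQ with hξ
    have hξA : ∀ a ∈ A, ξ a = 0 := by
      intro a ha
      have h0 : A.mkQ a = 0 := by simpa [Submodule.Quotient.mk_eq_zero] using ha
      simp [hξ, h0]
    have hξu : ξ u₀ = 1 := by
      have h1 : ξ u₀ =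
          η ⟨A.mkQ u₀, Submodule.mem_span_singleton_self _⟩ := by
        simpa [hξ] using
          LinearMap.ofIsCompl_left_apply hc
            (⟨A.mkQ u₀, Submodule.mem_span_singleton_self _⟩ : (ℝ ∙ (A.mkQ u₀)))
      rw [h1, hη]
      exact LinearEquiv.coord_self ℝ _ _ hm
    set D : Submodule ℝ X := A ⊔ ℝ ∙ u₀ with hD
    set f : X →ₗ.[ℝ] ℝ := ⟨D, (d • ξ).domRestrict D⟩ with hf_def
    have hfval : ∀ (x : X) (hx : x ∈ D), f ⟨x, hx⟩ = d * ξ x := by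
      intro x hx
      show ((d • ξ).domRestrict D) ⟨x, hx⟩ = d * ξ x
      simp [LinearMap.domRestrict_apply, smul_eq_mul]
    have hf : ∀ x : f.domain, f x ≤ N x := by
      rintro ⟨x, hx⟩
      obtain ⟨a, ha, z, hz, hxeq⟩ := Submodule.mem_sup.1 hx
      obtain ⟨t, rfl⟩ := Submodule.mem_span_singleton.1 hz
      have hξx : ξ x = t := by
        rw [← hxeq, map_add, LinearMap.map_smul, hξA a ha, hξu]
        simp
      have hfx : (f ⟨x, hx⟩ : ℝ) = d * t := by rw [hfval x hx, hξx]
      show (f ⟨x, hx⟩ : ℝ) ≤ N x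
      rw [hfx]
      rcases le_or_gt t 0 with ht | ht
      · have h1 : d * t ≤ 0 := mul_nonpos_iff.2 (Or.inl ⟨hd0, ht⟩)
        exact h1.trans (hN_nonneg _)
      · have heq : x = t • (u₀ + t⁻¹ • a) := by
          rw [← hxeq, smul_add, smul_smul, mul_inv_cancel₀ ht.ne', one_smul]
          abel
        rw [heq, hN_smul t ht]
        have h2 := hkey (t⁻¹ • a) (A.smul_mem _ ha)
        nlinarith
    obtain ⟨φ, hφf, hφN⟩ := exists_extension_of_le_sublinear f N hN_smul hN_add hf
    refine ⟨φ, hφN, ?_, ?_⟩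
    · intro a ha
      have hmem : a ∈ D := (le_sup_left : A ≤ D) ha
      have h3 := hφf ⟨a, hmem⟩
      rw [hfval a hmem, hξA a ha, mul_zero] at h3
      simpa using h3
    · have hmem : u₀ ∈ D :=
        (le_sup_right : (ℝ ∙ u₀) ≤ D) (Submodule.mem_span_singleton_self u₀)
      have h3 := hφf ⟨u₀, hmem⟩
      rw [hfval u₀ hmem, hξu, mul_one] at h3
      simpa using h3

/-- The submodule of finite rank operators. -/
def finRankOps9 (Z W : Type*) [NormedAddCommGroup Z] [NormedSpace ℝ Z]
    [NormedAddCommGroup W] [NormedSpace ℝ W] : Submodule ℝ (Z →L[ℝ] W) where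
  carrier := {u | FiniteDimensional ℝ (LinearMap.range (u : Z →ₗ[ℝ] W))}
  add_mem' := by
    intro u v hu hv
    haveI : FiniteDimensional ℝ (LinearMap.range (u : Z →ₗ[ℝ] W)) := hu
    haveI : FiniteDimensional ℝ (LinearMap.range (v : Z →ₗ[ℝ] W)) := hv
    apply Submodule.finiteDimensional_of_le
      (S₂ := LinearMap.range (u : Z →ₗ[ℝ] W) ⊔ LinearMap.range (v : Z →ₗ[ℝ] W))
    rintro x ⟨z, rfl⟩
    simpa using Submodule.add_mem_sup
      (LinearMap.mem_range_self (u : Z →ₗ[ℝ] W) z)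
      (LinearMap.mem_range_self (v : Z →ₗ[ℝ] W) z)
  zero_mem' := by
    show FiniteDimensional ℝ (LinearMap.range ((0 : Z →L[ℝ] W) : Z →ₗ[ℝ] W))
    rw [show ((0 : Z →L[ℝ] W) : Z →ₗ[ℝ] W) = 0 from rfl, LinearMap.range_zero]
    infer_instance
  smul_mem' := by
    intro c u hu
    haveI : FiniteDimensional ℝ (LinearMap.range (u : Z →ₗ[ℝ] W)) := hu
    apply Submodule.finiteDimensional_of_le (S₂ := LinearMap.range (u : Z →ₗ[ℝ] W))
    rintro x ⟨z, rfl⟩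
    simpa using Submodule.smul_mem _ c (LinearMap.mem_range_self (u : Z →ₗ[ℝ] W) z)

theorem mem_finRankOps9 {Z W : Type*} [NormedAddCommGroup Z] [NormedSpace ℝ Z]
    [NormedAddCommGroup W] [NormedSpace ℝ W] (u : Z →L[ℝ] W) :
    u ∈ finRankOps9 Z W ↔ FiniteDimensional ℝ (LinearMap.range (u : Z →ₗ[ℝ] W)) :=
  Iff.rfl

end Aux9

set_option maxHeartbeats 1000000 in
theorem statement9
    {Z W : Type*} [NormedAddCommGroup Z] [NormedSpace ℝ Z] [CompleteSpace Z]
    [NormedAddCommGroup W] [NormedSpace ℝ W] [CompleteSpace W]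
    (T : Z →L[ℝ] W) (Z₀ : Subspace ℝ Z) (n : ℕ)
    [FiniteDimensional ℝ (Z₀.map T.toLinearMap)]
    (hn : Module.finrank ℝ (Z₀.map T.toLinearMap) = n)
    (α : (Z →L[ℝ] W) → ℝ)
    (hα_add : ∀ u v : Z →L[ℝ] W, FiniteDimensional ℝ (LinearMap.range u.toLinearMap) →
      FiniteDimensional ℝ (LinearMap.range v.toLinearMap) → α (u + v) ≤ α u + α v)
    (hα_smul : ∀ (c : ℝ) (u : Z →L[ℝ] W), FiniteDimensional ℝ (LinearMap.range u.toLinearMap) →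
      α (c • u) = |c| * α u)
    (hα_pos : ∀ u : Z →L[ℝ] W, FiniteDimensional ℝ (LinearMap.range u.toLinearMap) →
      u ≠ 0 → 0 < α u)
    (hα_rank1 : ∀ u : Z →L[ℝ] W,
      Module.rank ℝ (LinearMap.range u.toLinearMap) = 1 → α u ≤ ‖u‖)
    (β : ℝ) (hβ : 1 ≤ β) (hq : qW W n β ≠ ⊤) :
    ∃ P : W →L[ℝ] W, FiniteDimensional ℝ (LinearMap.range P.toLinearMap) ∧
      ‖P‖ ≤ β ∧ (Module.finrank ℝ (LinearMap.range P.toLinearMap) : ℕ∞) ≤ qW W n β ∧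
      sInf {a : ℝ | ∃ u : Z →L[ℝ] W, FiniteDimensional ℝ (LinearMap.range u.toLinearMap) ∧
        (∀ z ∈ Z₀, u z = T z) ∧ a = α u} ≤ α (P.comp T) := by
  classical
  -- basic facts about α
  have h0fd : FiniteDimensional ℝ (LinearMap.range ((0 : Z →L[ℝ] W)).toLinearMap) :=
    (finRankOps9 Z W).zero_mem
  have hα0 : α (0 : Z →L[ℝ] W) = 0 := by
    have h := hα_smul 0 0 h0fd
    simpa using h
  have hαnonneg : ∀ u : Z →L[ℝ] W,
      FiniteDimensional ℝ (LinearMap.range u.toLinearMap) → 0 ≤ α u := by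
    intro u hu
    rcases eq_or_ne u 0 with rfl | hne
    · exact le_of_eq hα0.symm
    · exact (hα_pos u hu hne).le
  -- the finite-dimensional range and a basis for it
  set F := Z₀.map T.toLinearMap with hF
  let y : Module.Basis (Fin n) ℝ F := Module.finBasisOfFinrankEq ℝ F hn
  obtain ⟨Q, hQ⟩ := Submodule.ClosedComplemented.of_finiteDimensional (𝕜 := ℝ) F
  let yc : Fin n → (F →L[ℝ] ℝ) := fun i => LinearMap.toContinuousLinearMap (y.coord i)
  let g : Fin n → (Z →L[ℝ] ℝ) := fun i => (yc i).comp (Q.comp T)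
  let r : Fin n → (Z →L[ℝ] W) := fun i => (g i).smulRight ((y i : F) : W)
  have hrange_smulRight : ∀ (h : Z →L[ℝ] ℝ) (w : W),
      h.smulRight w ∈ finRankOps9 Z W := by
    intro h w
    rw [mem_finRankOps9]
    apply Submodule.finiteDimensional_of_le (S₂ := ℝ ∙ w)
    rintro x ⟨z, rfl⟩
    simpa using Submodule.smul_mem _ (h z) (Submodule.mem_span_singleton_self w)
  set u₀ : Z →L[ℝ] W := ∑ i, r i with hu₀
  have hu₀mem : u₀ ∈ finRankOps9 Z W :=
    Submodule.sum_mem _ fun i _ => hrange_smulRight _ _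
  have hval : ∀ z : Z, ∀ x : F, Q (T z) = x → u₀ z = x := by
    intro z x hx
    have h1 : u₀ z = ∑ i, (y.repr x i) • ((y i : F) : W) := by
      simp [hu₀, r, g, yc, ContinuousLinearMap.sum_apply, hx, Module.Basis.coord_apply]
    have h2 : ((∑ i, (y.repr x i) • y i : F) : W) = ∑ i, (y.repr x i) • ((y i : F) : W) := by
      simp only [Submodule.coe_sum, Submodule.coe_smul]
    rw [h1, ← h2, Module.Basis.sum_repr]
  have hu₀T : ∀ z ∈ Z₀, u₀ z = T z := by
    intro z hz
    have hTz : T z ∈ F := ⟨z, hz, rfl⟩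
    exact hval z ⟨T z, hTz⟩ (hQ ⟨T z, hTz⟩)
  -- the infimum
  set Sset : Set ℝ := {a : ℝ | ∃ u : Z →L[ℝ] W,
    FiniteDimensional ℝ (LinearMap.range u.toLinearMap) ∧
    (∀ z ∈ Z₀, u z = T z) ∧ a = α u} with hSset
  set d : ℝ := sInf Sset with hd
  have hSnonneg : ∀ a ∈ Sset, 0 ≤ a := by
    rintro a ⟨u, hu, -, rfl⟩
    exact hαnonneg u hu
  have hd0 : 0 ≤ d := Real.sInf_nonneg hSnonneg
  have hdle : ∀ u : Z →L[ℝ] W, u ∈ finRankOps9 Z W → (∀ z ∈ Z₀, u z = T z) → d ≤ α u := by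
    intro u hu hT'
    exact csInf_le ⟨0, fun a ha => hSnonneg a ha⟩ ⟨u, hu, hT', rfl⟩
  -- Hahn-Banach functional on the space of finite rank operators
  set N : ↥(finRankOps9 Z W) → ℝ := fun x => α ↑x with hN
  set A : Submodule ℝ ↥(finRankOps9 Z W) :=
    { carrier := {x : ↥(finRankOps9 Z W) | ∀ z ∈ Z₀, (x : Z →L[ℝ] W) z = 0}
      add_mem' := by
        intro x y hx hy z hz
        have : ((x + y : ↥(finRankOps9 Z W)) : Z →L[ℝ] W) z
            = (x : Z →L[ℝ] W) z + (y : Z →L[ℝ] W) z := by simp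
        rw [this, hx z hz, hy z hz, add_zero]
      zero_mem' := by intro z hz; simp
      smul_mem' := by
        intro c x hx z hz
        have : ((c • x : ↥(finRankOps9 Z W)) : Z →L[ℝ] W) z = c • (x : Z →L[ℝ] W) z := by simp
        rw [this, hx z hz, smul_zero] } with hA
  have hmemA : ∀ x : ↥(finRankOps9 Z W), (∀ z ∈ Z₀, (x : Z →L[ℝ] W) z = 0) → x ∈ A := fun x hx => hx
  set xu₀ : ↥(finRankOps9 Z W) := ⟨u₀, hu₀mem⟩ with hxu₀
  obtain ⟨φ, hφle, hφA, hφu₀⟩ :=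
    auxHB9 N A xu₀ d
      (fun x y => by
        have h := hα_add ↑x ↑y x.2 y.2
        simpa [hN] using h)
      (fun c hc x => by
        have h := hα_smul c ↑x x.2
        simpa [hN, abs_of_pos hc] using h)
      (fun x => hαnonneg ↑x x.2)
      hd0
      (fun a ha => by
        refine hdle ↑(xu₀ + a) (xu₀ + a).2 ?_
        intro z hz
        have h1 : ((xu₀ + a : ↥(finRankOps9 Z W)) : Z →L[ℝ] W) z
            = u₀ z + (a : Z →L[ℝ] W) z := by simp [hxu₀]
        rw [h1, hu₀T z hz, ha z hz, add_zero])
  have hφabs : ∀ x : ↥(finRankOps9 Z W), |φ x| ≤ α ↑x := by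
    intro x
    refine abs_le.2 ⟨?_, hφle x⟩
    have h1 : φ (-x) ≤ α ((-x : ↥(finRankOps9 Z W)) : Z →L[ℝ] W) := hφle (-x)
    have hneg : α ((-x : ↥(finRankOps9 Z W)) : Z →L[ℝ] W) = α ↑x := by
      have h2 := hα_smul (-1) ↑x x.2
      have h3 : ((-x : ↥(finRankOps9 Z W)) : Z →L[ℝ] W) = (-1 : ℝ) • (x : Z →L[ℝ] W) := by simp
      rw [h3, h2]
      simp
    rw [map_neg, hneg] at h1
    linarith
  -- α of a rank ≤ 1 operator is bounded by its norm
  have hα_sr : ∀ (h : Z →L[ℝ] ℝ) (w : W), α (h.smulRight w) ≤ ‖h‖ * ‖w‖ := by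
    intro h w
    rcases eq_or_ne (h.smulRight w) 0 with h0 | hne
    · rw [h0, hα0]
      positivity
    · have hw : w ≠ 0 := by
        rintro rfl
        exact hne (by ext z; simp)
      have hz' : ∃ z, h z ≠ 0 := by
        by_contra hc
        push_neg at hc
        exact hne (by ext z; simp [hc z])
      obtain ⟨z, hz⟩ := hz'
      have hrange : LinearMap.range (h.smulRight w).toLinearMap = ℝ ∙ w := by
        apply le_antisymm
        · rintro x ⟨z', rfl⟩
          simpa using Submodule.smul_mem _ (h z') (Submodule.mem_span_singleton_self w)
        · rw [Submodule.span_singleton_le_iff_mem]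
          refine ⟨(h z)⁻¹ • z, ?_⟩
          simp [smul_smul, inv_mul_cancel₀ hz]
      have hrank : Module.rank ℝ (LinearMap.range (h.smulRight w).toLinearMap) = 1 := by
        rw [hrange, ← Module.finrank_eq_rank ℝ, finrank_span_singleton hw, Nat.cast_one]
      calc α (h.smulRight w) ≤ ‖h.smulRight w‖ := hα_rank1 _ hrank
        _ = ‖h‖ * ‖w‖ := ContinuousLinearMap.norm_smulRight_apply h w
  -- the test operator v
  let ι : Fin n → (W →ₗ[ℝ] ↥(finRankOps9 Z W)) := fun i =>
    LinearMap.codRestrict (finRankOps9 Z W)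
      ((ContinuousLinearMap.smulRightL ℝ Z W (g i)).toLinearMap)
      (fun w => hrange_smulRight (g i) w)
  let L : Fin n → (W →ₗ[ℝ] ℝ) := fun i => φ.comp (ι i)
  have hLval : ∀ i w, L i w = φ ⟨(g i).smulRight w, hrange_smulRight _ _⟩ :=
    fun i w => rfl
  have hLbound : ∀ i w, ‖L i w‖ ≤ ‖g i‖ * ‖w‖ := by
    intro i w
    rw [Real.norm_eq_abs, hLval]
    exact (hφabs _).trans (hα_sr (g i) w)
  let v : W →L[ℝ] (Fin n → ℝ) :=
    ContinuousLinearMap.pi fun i => LinearMap.mkContinuous (L i) ‖g i‖ (hLbound i)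
  have hvapp : ∀ (w : W) (i : Fin n),
      v w i = φ ⟨(g i).smulRight w, hrange_smulRight _ _⟩ := fun w i => rfl
  have hrankv : Module.rank ℝ (LinearMap.range v.toLinearMap) ≤ (n : Cardinal) := by
    refine le_trans (Submodule.rank_le _) ?_
    rw [rank_fin_fun]
  -- extract the minimal k' from qW
  have hqset : {k : ℕ∞ | ∃ k' : ℕ, k = (k' : ℕ∞) ∧
      ∀ (E : Type) [NormedAddCommGroup E] [NormedSpace ℝ E] (v : W →L[ℝ] E),
        Module.rank ℝ (LinearMap.range v.toLinearMap) ≤ (n : Cardinal) →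
        ∃ P : W →L[ℝ] W, v.comp P = v ∧ ‖P‖ ≤ β ∧
          Module.rank ℝ (LinearMap.range P.toLinearMap) ≤ (k' : Cardinal)}.Nonempty := by
    by_contra hne
    rw [Set.not_nonempty_iff_eq_empty] at hne
    apply hq
    rw [qW, hne, sInf_empty]
  obtain ⟨k', hk', hprop⟩ :
      ∃ k' : ℕ, qW W n β = (k' : ℕ∞) ∧
      ∀ (E : Type) [NormedAddCommGroup E] [NormedSpace ℝ E] (v : W →L[ℝ] E),
        Module.rank ℝ (LinearMap.range v.toLinearMap) ≤ (n : Cardinal) →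
        ∃ P : W →L[ℝ] W, v.comp P = v ∧ ‖P‖ ≤ β ∧
          Module.rank ℝ (LinearMap.range P.toLinearMap) ≤ (k' : Cardinal) :=
    csInf_mem hqset
  obtain ⟨P, hvP, hPnorm, hPrank⟩ := hprop (Fin n → ℝ) v hrankv
  haveI hPfd : FiniteDimensional ℝ (LinearMap.range P.toLinearMap) := by
    have hlt : Module.rank ℝ (LinearMap.range P.toLinearMap) < Cardinal.aleph0 :=
      lt_of_le_of_lt hPrank (Cardinal.nat_lt_aleph0 k')
    exact IsNoetherian.iff_fg.1 (IsNoetherian.iff_rank_lt_aleph0.2 hlt)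
  refine ⟨P, hPfd, hPnorm, ?_, ?_⟩
  · rw [hk']
    exact Nat.cast_le.2 (Module.finrank_le_of_rank_le hPrank)
  · -- the main estimate
    have hPT : P.comp T ∈ finRankOps9 Z W := by
      rw [mem_finRankOps9]
      apply Submodule.finiteDimensional_of_le (S₂ := LinearMap.range P.toLinearMap)
      rintro x ⟨z, rfl⟩
      exact ⟨T z, by simp⟩
    set xPT : ↥(finRankOps9 Z W) := ⟨P.comp T, hPT⟩ with hxPT
    set xPr : Fin n → ↥(finRankOps9 Z W) :=
      (fun i => ⟨(g i).smulRight (P ((y i : F) : W)), hrange_smulRight _ _⟩) with hxPr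
    set xr : Fin n → ↥(finRankOps9 Z W) :=
      (fun i => ⟨(g i).smulRight ((y i : F) : W), hrange_smulRight _ _⟩) with hxr
    -- step 1 : φ xPT = φ (∑ xPr)
    have hdiffA : xPT - ∑ i, xPr i ∈ A := by
      refine hmemA _ ?_
      intro z hz
      have hcoe : ((xPT - ∑ i, xPr i : ↥(finRankOps9 Z W)) : Z →L[ℝ] W) z
          = (P.comp T) z - ∑ i, (g i z) • P ((y i : F) : W) := by
        simp [hxPT, hxPr, ContinuousLinearMap.sum_apply]
      rw [hcoe]
      have hsum : (∑ i, (g i z) • P ((y i : F) : W)) = P (u₀ z) := by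
        rw [hu₀]
        simp [r, ContinuousLinearMap.sum_apply, map_sum, _root_.map_smul]
      rw [hsum, hu₀T z hz]
      simp
    have h1 : φ xPT = φ (∑ i, xPr i) := by
      have h2 := hφA _ hdiffA
      have h2' : φ xPT - φ (∑ i, xPr i) = 0 := by
        rw [← map_sub]
        exact h2
      linarith
    -- step 2 : each term is unchanged when composing with P
    have h3 : ∀ i, φ (xPr i) = φ (xr i) := by
      intro i
      have hv1 : v (P ((y i : F) : W)) = v ((y i : F) : W) := by
        rw [← ContinuousLinearMap.comp_apply, hvP]
      have hv2 : v (P ((y i : F) : W)) i = v ((y i : F) : W) i := congrFun hv1 i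
      rw [hvapp, hvapp] at hv2
      simp only [hxPr, hxr]
      exact hv2
    -- step 3 : resum
    have h4 : (∑ i, xr i) = xu₀ := by
      apply Subtype.ext
      show ((∑ i, xr i : ↥(finRankOps9 Z W)) : Z →L[ℝ] W) = u₀
      rw [hu₀]
      simp only [AddSubmonoidClass.coe_finset_sum, hxr]
      rfl
    have h5 : φ xPT = d := by
      rw [h1, map_sum]
      calc ∑ i, φ (xPr i) = ∑ i, φ (xr i) := Finset.sum_congr rfl fun i _ => h3 i
        _ = φ (∑ i, xr i) := (map_sum φ _ _).symm
        _ = φ xu₀ := by rw [h4]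
        _ = d := hφu₀
    have h6 : φ xPT ≤ α (P.comp T) := hφle xPT
    rw [h5] at h6
    exact h6
end
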